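/- arXiv:math/0406616 — 3 statements merged into one kernel-verified Lean document; each statement's English description precedes it below -/
import Mathlib

section
/- Let σ, c ∈ ℝ and R > 0 satisfy |a_l − c| < R for all l and |σ − c| > R, and define K(x,y) = (1/(2πi)²) ∫_{u∈ℝ} ( ∮_{|t−c|=R} exp((σ+iu−x)²/2 − (t−y)²/2) · ∏_{k=1}^m ((σ+iu−a_k)/(t−a_k))^{n_k} · (σ+iu−t)^{−1} dt ) · i du. Then for all x, y ∈ ℝ, the partial derivatives of K exist and ∂K/∂x (x,y) + ∂K/∂y (x,y) = (x − y)·K(x,y) − P_{(n_1,…,n_m)}(x)·Q_{(n_1,…,n_m)}(y). -/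
open MeasureTheory Finset

/-- The multiple Hermite function of type II (integral representation). -/
noncomputable def mhP {m : ℕ} (a : Fin m → ℝ) (ν : Fin m → ℕ) (x : ℝ) : ℂ :=
  (Real.sqrt (2 * Real.pi) : ℂ)⁻¹ *
    ∫ u : ℝ, Complex.exp (-(u : ℂ) ^ 2 / 2) *
      ∏ k, ((x : ℂ) - (a k : ℂ) + Complex.I * (u : ℂ)) ^ (ν k)

/-- The multiple Hermite linear form of type I (integral representation),
with contour a counterclockwise circle of center `c` and radius `R`. -/
noncomputable def mhQ {m : ℕ} (a : Fin m → ℝ) (c R : ℝ) (ν : Fin m → ℕ) (y : ℝ) : ℂ :=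
  ((Real.sqrt (2 * Real.pi) : ℂ) * (2 * Real.pi * Complex.I))⁻¹ *
    ∮ t in C((c : ℂ), R),
      Complex.exp (-(t - (y : ℂ)) ^ 2 / 2) * ∏ l, (t - (a l : ℂ)) ^ (-(ν l : ℤ))

/-- The Brézin–Hikami kernel, with the vertical line `Re = σ` (parametrized by
`s = σ + i u`, `ds = i du`) and a counterclockwise circle of center `c`, radius `R`. -/
noncomputable def mhK {m : ℕ} (a : Fin m → ℝ) (n : Fin m → ℕ) (σ c R : ℝ) (x y : ℝ) : ℂ :=
  ((2 * Real.pi * Complex.I) ^ 2)⁻¹ *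
    ∫ u : ℝ,
      (∮ t in C((c : ℂ), R),
        Complex.exp (((σ : ℂ) + Complex.I * u - x) ^ 2 / 2 - (t - (y : ℂ)) ^ 2 / 2) *
          (∏ k, (((σ : ℂ) + Complex.I * u - a k) / (t - (a k : ℂ))) ^ (n k)) *
          ((σ : ℂ) + Complex.I * u - t)⁻¹) * Complex.I


open MeasureTheory Finset Complex Filter Set

namespace MH8

/-- basic integrable bound -/
noncomputable def gb (d : ℕ) (u : ℝ) : ℝ := (1 + |u|) ^ d * Real.exp (-u ^ 2 / 2)

lemma gb_nonneg (d : ℕ) (u : ℝ) : 0 ≤ gb d u :=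
  mul_nonneg (pow_nonneg (by positivity) _) (Real.exp_pos _).le

lemma gb_le (d : ℕ) (u : ℝ) : gb d u ≤ 2 ^ d * Real.exp (-u ^ 2 / 2) + 2 ^ d * (|u| ^ d * Real.exp (-u ^ 2 / 2)) := by
  have h1 : (1 + |u|) ^ d ≤ 2 ^ d * (1 + |u| ^ d) := by
    have : (1 + |u|) ≤ 2 * max 1 |u| := by
      rcases le_total 1 |u| with h | h
      · rw [max_eq_right h]; linarith
      · rw [max_eq_left h]; linarith
    calc (1 + |u|) ^ d ≤ (2 * max 1 |u|) ^ d :=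
          pow_le_pow_left₀ (by positivity) this d
      _ = 2 ^ d * (max 1 |u|) ^ d := by rw [mul_pow]
      _ ≤ 2 ^ d * (1 + |u| ^ d) := by
          gcongr
          rcases le_total 1 |u| with h | h
          · rw [max_eq_right h]
            have := pow_nonneg (le_trans zero_le_one h) d
            linarith
          · rw [max_eq_left h, one_pow]
            have := pow_nonneg (abs_nonneg u) d
            linarith
  calc gb d u ≤ 2 ^ d * (1 + |u| ^ d) * Real.exp (-u ^ 2 / 2) :=
        mul_le_mul_of_nonneg_right h1 (Real.exp_pos _).le
    _ = _ := by ring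

lemma integrable_gb (d : ℕ) : Integrable (gb d) := by
  have h2 : Integrable (fun u : ℝ => u ^ d * Real.exp (-(1/2 : ℝ) * u ^ 2)) := by
    have := integrable_rpow_mul_exp_neg_mul_sq (b := 1/2) (by norm_num) (s := d)
      (lt_of_lt_of_le neg_one_lt_zero (Nat.cast_nonneg d))
    simpa [Real.rpow_natCast] using this
  have h2' : Integrable (fun u : ℝ => |u| ^ d * Real.exp (-u ^ 2 / 2)) := by
    have := h2.abs
    refine this.congr ?_
    filter_upwards with u
    rw [abs_mul, _root_.abs_pow, _root_.abs_of_nonneg (Real.exp_pos _).le]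
    congr 2
    ring
  have h3 : Integrable (fun u : ℝ => Real.exp (-u ^ 2 / 2)) := by
    have := integrable_exp_neg_mul_sq (b := 1/2) (by norm_num)
    refine this.congr ?_
    filter_upwards with u
    congr 1; ring
  refine Integrable.mono' ((h3.const_mul (2 ^ d)).add (h2'.const_mul (2 ^ d))) ?_ ?_
  · exact ((continuous_const.add _root_.continuous_abs).pow d |>.mul
      (by continuity : Continuous fun u : ℝ => Real.exp (-u ^ 2 / 2))).aestronglyMeasurable
  · filter_upwards with u
    rw [Real.norm_eq_abs, _root_.abs_of_nonneg (gb_nonneg d u)]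
    exact gb_le d u

lemma tendsto_gb_atTop (d : ℕ) : Tendsto (gb d) atTop (nhds 0) := by
  have key : Tendsto (fun u : ℝ => 2 ^ d * ((2:ℝ) ^ d * ((u / 2) ^ d * Real.exp (-(u / 2))))) atTop (nhds 0) := by
    have h0 : Tendsto (fun x : ℝ => x ^ d * Real.exp (-x)) atTop (nhds 0) :=
      Real.tendsto_pow_mul_exp_neg_atTop_nhds_zero d
    have h1 : Tendsto (fun u : ℝ => u / 2) atTop atTop :=
      tendsto_id.atTop_div_const (by norm_num)
    have := (h0.comp h1).const_mul ((2:ℝ) ^ d)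
    simpa using (this.const_mul ((2:ℝ) ^ d))
  refine squeeze_zero_norm' ?_ key
  filter_upwards [eventually_ge_atTop (1:ℝ)] with u hu
  have hu0 : (0:ℝ) ≤ u := by linarith
  rw [Real.norm_eq_abs, _root_.abs_of_nonneg (gb_nonneg d u)]
  have h1 : (1 + |u|) ^ d ≤ (2 * u) ^ d := by
    apply pow_le_pow_left₀ (by positivity)
    rw [_root_.abs_of_nonneg hu0]; linarith
  have h2 : Real.exp (-u ^ 2 / 2) ≤ Real.exp (-(u / 2)) := by
    apply Real.exp_le_exp.2; nlinarith
  calc gb d u ≤ (2 * u) ^ d * Real.exp (-(u/2)) :=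
        mul_le_mul h1 h2 (Real.exp_pos _).le (by positivity)
    _ = 2 ^ d * ((2:ℝ) ^ d * ((u / 2) ^ d * Real.exp (-(u / 2)))) := by
        rw [mul_pow, div_pow]
        field_simp
  
lemma tendsto_gb_atBot (d : ℕ) : Tendsto (gb d) atBot (nhds 0) := by
  have : Tendsto (fun u : ℝ => gb d (-u)) atBot (nhds 0) :=
    (tendsto_gb_atTop d).comp tendsto_neg_atBot_atTop
  exact this.congr fun u => by simp [gb, abs_neg, neg_sq]

end MH8

open Complex Filter Set Polynomial

namespace MH8

/-- coefficient-sum bound for polynomial evaluation -/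
noncomputable def pS (P : ℂ[X]) : ℝ := ∑ i ∈ Finset.range (P.natDegree + 1), ‖P.coeff i‖

lemma pS_nonneg (P : ℂ[X]) : 0 ≤ pS P := Finset.sum_nonneg fun _ _ => norm_nonneg _

lemma poly_eval_bound (P : ℂ[X]) (z : ℂ) :
    ‖P.eval z‖ ≤ pS P * (1 + ‖z‖) ^ P.natDegree := by
  conv_lhs => rw [Polynomial.eval_eq_sum_range]
  refine (norm_sum_le _ _).trans ?_
  rw [pS, Finset.sum_mul]
  refine Finset.sum_le_sum fun i hi => ?_
  rw [norm_mul, norm_pow]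
  have h1 : ‖z‖ ^ i ≤ (1 + ‖z‖) ^ P.natDegree := by
    calc ‖z‖ ^ i ≤ (1 + ‖z‖) ^ i := pow_le_pow_left₀ (norm_nonneg z) (by linarith [norm_nonneg z]) i
      _ ≤ (1 + ‖z‖) ^ P.natDegree :=
        pow_le_pow_right₀ (by linarith [norm_nonneg z]) (Nat.lt_succ_iff.mp (Finset.mem_range.mp hi))
  exact mul_le_mul_of_nonneg_left h1 (norm_nonneg _)

/-- norm of the Gaussian-type exponential on a vertical line (real shift w) -/
lemma norm_cexp_vert (r w u : ℝ) :
    ‖Complex.exp (((r : ℂ) + I * u - w) ^ 2 / 2)‖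
      = Real.exp ((r - w) ^ 2 / 2) * Real.exp (-u ^ 2 / 2) := by
  have h : ((r : ℂ) + I * u - w) ^ 2 / 2
      = ((((r - w) ^ 2 - u ^ 2) / 2 : ℝ) : ℂ) + (((r - w) * u : ℝ) : ℂ) * I := by
    push_cast
    have : (I:ℂ)^2 = -1 := I_sq
    ring_nf
    rw [this]
    ring
  rw [h, Complex.exp_add, norm_mul,
    norm_exp_ofReal, norm_exp_ofReal_mul_I, mul_one, ← Real.exp_add]
  congr 1
  ring

/-- the entire function whose vertical-line integrals we shift -/
noncomputable def vf (P : ℂ[X]) (w : ℝ) (z : ℂ) : ℂ := P.eval z * Complex.exp ((z - w) ^ 2 / 2)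

lemma vf_hasDerivAt (P : ℂ[X]) (w : ℝ) (z : ℂ) :
    HasDerivAt (vf P w) (vf (P.derivative + P * (X - C (w:ℂ))) w z) z := by
  have h1 : HasDerivAt (fun z : ℂ => (z - (w:ℂ)) ^ 2 / 2) (z - w) z := by
    have := (((hasDerivAt_id z).sub_const (w:ℂ)).pow 2).div_const 2
    simpa using this
  have h2 : HasDerivAt (fun z : ℂ => Complex.exp ((z - (w:ℂ)) ^ 2 / 2))
      ((z - w) * Complex.exp ((z - w) ^ 2 / 2)) z := by
    simpa [mul_comm] using h1.cexp
  have h3 := (P.hasDerivAt z).mul h2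
  refine h3.congr_deriv ?_
  simp only [vf, eval_add, eval_mul, eval_sub, eval_X, eval_C, derivative_mul]
  ring

lemma vf_cont (P : ℂ[X]) (w : ℝ) (r : ℝ) :
    Continuous (fun u : ℝ => vf P w ((r : ℂ) + I * u)) := by
  unfold vf
  fun_prop

lemma vf_norm_le (P : ℂ[X]) (w : ℝ) (r : ℝ) (u : ℝ) :
    ‖vf P w ((r : ℂ) + I * u)‖
      ≤ pS P * (1 + |r|) ^ P.natDegree * Real.exp ((r - w) ^ 2 / 2) * gb P.natDegree u := by
  rw [vf, norm_mul, norm_cexp_vert r w u]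
  have hz : ‖(r : ℂ) + I * u‖ ≤ |r| + |u| := by
    refine (norm_add_le _ _).trans ?_
    simp [Complex.norm_real]
  have h1 : ‖P.eval ((r : ℂ) + I * u)‖ ≤ pS P * ((1 + |r|) * (1 + |u|)) ^ P.natDegree := by
    refine (poly_eval_bound P _).trans ?_
    have : (1 : ℝ) + ‖(r:ℂ) + I * u‖ ≤ (1 + |r|) * (1 + |u|) := by
      have := abs_nonneg r; have := abs_nonneg u
      nlinarith [hz]
    gcongr
    exact pS_nonneg P
  calc ‖P.eval ((r : ℂ) + I * u)‖ * (Real.exp ((r - w) ^ 2 / 2) * Real.exp (-u ^ 2 / 2))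
      ≤ pS P * ((1 + |r|) * (1 + |u|)) ^ P.natDegree * (Real.exp ((r - w) ^ 2 / 2) * Real.exp (-u ^ 2 / 2)) := by
        refine mul_le_mul_of_nonneg_right h1 (by positivity)
    _ = pS P * (1 + |r|) ^ P.natDegree * Real.exp ((r - w) ^ 2 / 2) * gb P.natDegree u := by
        rw [mul_pow, gb]; ring

lemma vf_integrable (P : ℂ[X]) (w : ℝ) (r : ℝ) :
    Integrable (fun u : ℝ => vf P w ((r : ℂ) + I * u)) := by
  refine Integrable.mono' (((integrable_gb P.natDegree).const_mul
    (pS P * (1 + |r|) ^ P.natDegree * Real.exp ((r - w) ^ 2 / 2)))) ((vf_cont P w r).aestronglyMeasurable) ?_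
  filter_upwards with u
  simpa [mul_assoc] using vf_norm_le P w r u

lemma vf_tendsto_atTop (P : ℂ[X]) (w : ℝ) (r : ℝ) :
    Tendsto (fun u : ℝ => vf P w ((r : ℂ) + I * u)) atTop (nhds 0) := by
  refine squeeze_zero_norm (fun u => vf_norm_le P w r u) ?_
  simpa using (tendsto_gb_atTop P.natDegree).const_mul
    (pS P * (1 + |r|) ^ P.natDegree * Real.exp ((r - w) ^ 2 / 2))

lemma vf_tendsto_atBot (P : ℂ[X]) (w : ℝ) (r : ℝ) :
    Tendsto (fun u : ℝ => vf P w ((r : ℂ) + I * u)) atBot (nhds 0) := by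
  refine squeeze_zero_norm (fun u => vf_norm_le P w r u) ?_
  simpa using (tendsto_gb_atBot P.natDegree).const_mul
    (pS P * (1 + |r|) ^ P.natDegree * Real.exp ((r - w) ^ 2 / 2))

end MH8

open Complex Filter Set Polynomial

namespace MH8

lemma vf_norm_le_ball (P : ℂ[X]) (w r : ℝ) {r' : ℝ} (h : |r' - r| ≤ 1) (u : ℝ) :
    ‖vf P w ((r' : ℂ) + I * u)‖
      ≤ pS P * (1 + (|r| + 1)) ^ P.natDegree * Real.exp ((|r - w| + 1) ^ 2 / 2)
        * gb P.natDegree u := by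
  refine (vf_norm_le P w r' u).trans ?_
  have h1 : |r'| ≤ |r| + 1 := by
    have := abs_sub_abs_le_abs_sub r' r
    linarith
  have h2 : (r' - w) ^ 2 / 2 ≤ (|r - w| + 1) ^ 2 / 2 := by
    have h3 : |r' - w| ≤ |r - w| + 1 := by
      have := abs_sub_abs_le_abs_sub (r' - w) (r - w)
      have h4 : |r' - w - (r - w)| = |r' - r| := by ring_nf
      linarith
    nlinarith [abs_nonneg (r' - w), abs_nonneg (r - w), _root_.sq_abs (r' - w)]
  refine mul_le_mul_of_nonneg_right ?_ (gb_nonneg _ u)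
  have e1 : (1 + |r'|) ^ P.natDegree ≤ (1 + (|r| + 1)) ^ P.natDegree :=
    pow_le_pow_left₀ (by positivity) (by linarith) _
  have e2 : Real.exp ((r' - w) ^ 2 / 2) ≤ Real.exp ((|r - w| + 1) ^ 2 / 2) :=
    Real.exp_le_exp.2 h2
  refine mul_le_mul (mul_le_mul_of_nonneg_left e1 (pS_nonneg P)) e2 (Real.exp_pos _).le
    (mul_nonneg (pS_nonneg P) (pow_nonneg (by positivity) _))

lemma vf_hasDerivAt_real (P : ℂ[X]) (w : ℝ) (u : ℝ) (r' : ℝ) :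
    HasDerivAt (fun t : ℝ => vf P w ((t : ℂ) + I * u))
      (vf (P.derivative + P * (X - C (w:ℂ))) w ((r' : ℂ) + I * u)) r' := by
  have h1 : HasDerivAt (fun z : ℂ => vf P w (z + I * u))
      (vf (P.derivative + P * (X - C (w:ℂ))) w ((r' : ℂ) + I * u)) (r' : ℂ) := by
    have := (vf_hasDerivAt P w ((r' : ℂ) + I * u)).comp (r' : ℂ)
      ((hasDerivAt_id (r' : ℂ)).add_const (I * u))
    simpa [Function.comp_def] using this
  exact h1.comp_ofReal

lemma vf_hasDerivAt_im (P : ℂ[X]) (w : ℝ) (r : ℝ) (u : ℝ) :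
    HasDerivAt (fun t : ℝ => vf P w ((r : ℂ) + I * t))
      (vf (P.derivative + P * (X - C (w:ℂ))) w ((r : ℂ) + I * u) * I) u := by
  have h1 : HasDerivAt (fun z : ℂ => vf P w ((r:ℂ) + I * z))
      (vf (P.derivative + P * (X - C (w:ℂ))) w ((r : ℂ) + I * u) * I) (u : ℂ) := by
    have hin : HasDerivAt (fun z : ℂ => (r:ℂ) + I * z) I (u : ℂ) := by
      simpa using ((hasDerivAt_id (u : ℂ)).const_mul I).const_add (r : ℂ)
    have := (vf_hasDerivAt P w ((r : ℂ) + I * u)).comp (u : ℂ) hin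
    simpa [Function.comp_def] using this
  exact h1.comp_ofReal

lemma integral_vf_deriv_zero (P : ℂ[X]) (w r : ℝ) :
    ∫ u : ℝ, vf (P.derivative + P * (X - C (w:ℂ))) w ((r : ℂ) + I * u) = 0 := by
  set Q := P.derivative + P * (X - C (w:ℂ)) with hQ
  have hint : Integrable (fun u : ℝ => vf Q w ((r : ℂ) + I * u) * I) :=
    (vf_integrable Q w r).mul_const I
  have hg : ∀ u : ℝ, HasDerivAt (fun t : ℝ => vf P w ((r : ℂ) + I * t))
      (vf Q w ((r : ℂ) + I * u) * I) u := vf_hasDerivAt_im P w r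
  have hIic : ∫ u in Iic (0:ℝ), vf Q w ((r : ℂ) + I * u) * I
      = vf P w ((r : ℂ) + I * (0:ℝ)) - 0 := by
    refine integral_Iic_of_hasDerivAt_of_tendsto' (fun u _ => hg u)
      hint.integrableOn (vf_tendsto_atBot P w r)
  have hIoi : ∫ u in Ioi (0:ℝ), vf Q w ((r : ℂ) + I * u) * I
      = 0 - vf P w ((r : ℂ) + I * (0:ℝ)) := by
    refine integral_Ioi_of_hasDerivAt_of_tendsto'
      (fun u _ => hg u) hint.integrableOn (vf_tendsto_atTop P w r)
  have htot : ∫ u : ℝ, vf Q w ((r : ℂ) + I * u) * I = 0 := by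
    have := integral_add_compl (measurableSet_Iic (a := (0:ℝ))) hint
    rw [compl_Iic] at this
    rw [← this, hIic, hIoi]
    ring
  have : (∫ u : ℝ, vf Q w ((r : ℂ) + I * u)) * I = 0 := by
    rw [← integral_mul_const]; exact htot
  exact (mul_eq_zero.mp this).resolve_right I_ne_zero

lemma vshift_hasDerivAt (P : ℂ[X]) (w : ℝ) (r : ℝ) :
    HasDerivAt (fun r' : ℝ => ∫ u : ℝ, vf P w ((r' : ℂ) + I * u)) 0 r := by
  set Q := P.derivative + P * (X - C (w:ℂ)) with hQ
  have key := hasDerivAt_integral_of_dominated_loc_of_deriv_le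
    (F := fun (r' : ℝ) (u : ℝ) => vf P w ((r' : ℂ) + I * u))
    (F' := fun (r' : ℝ) (u : ℝ) => vf Q w ((r' : ℂ) + I * u))
    (x₀ := r)
    (bound := fun u => pS Q * (1 + (|r| + 1)) ^ Q.natDegree * Real.exp ((|r - w| + 1) ^ 2 / 2)
        * gb Q.natDegree u)
    (Metric.ball_mem_nhds _ one_pos)
    (Eventually.of_forall fun r' => (vf_cont P w r').aestronglyMeasurable)
    (vf_integrable P w r)
    ((vf_cont Q w r).aestronglyMeasurable)
    (Eventually.of_forall fun u => fun r' hr' =>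
      vf_norm_le_ball Q w r (le_of_lt (by simpa [Real.dist_eq] using hr')) u)
    (((integrable_gb Q.natDegree).const_mul _))
    (Eventually.of_forall fun u => fun r' _ => vf_hasDerivAt_real P w u r')
  have h2 := key.2
  rwa [integral_vf_deriv_zero P w r] at h2

lemma vshift_const (P : ℂ[X]) (w : ℝ) (r₁ r₂ : ℝ) :
    ∫ u : ℝ, vf P w ((r₁ : ℂ) + I * u) = ∫ u : ℝ, vf P w ((r₂ : ℂ) + I * u) := by
  have h := vshift_hasDerivAt P w
  exact is_const_of_deriv_eq_zero (fun r => (h r).differentiableAt)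
    (fun r => (h r).deriv) r₁ r₂

end MH8

open Complex Filter Set Polynomial

namespace MH8

section Main

variable {m : ℕ} (a : Fin m → ℝ) (n : Fin m → ℕ) (σ c R : ℝ)

/-- the product measure : `u` over `ℝ`, `θ` over `(0, 2π]` -/
noncomputable def pm : Measure (ℝ × ℝ) :=
  (volume : Measure ℝ).prod ((volume : Measure ℝ).restrict (Ioc 0 (2 * Real.pi)))

/-- the kernel integrand on the product space -/
noncomputable def Phi (x y : ℝ) (q : ℝ × ℝ) : ℂ :=
  (circleMap 0 R q.2 * I) *
    (Complex.exp (((σ : ℂ) + I * q.1 - x) ^ 2 / 2 - (circleMap (c : ℂ) R q.2 - y) ^ 2 / 2) *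
      (∏ k, (((σ : ℂ) + I * q.1 - a k) / (circleMap (c : ℂ) R q.2 - a k)) ^ (n k)) *
      ((σ : ℂ) + I * q.1 - circleMap (c : ℂ) R q.2)⁻¹)

/-- the `u`-factor after removing the pole -/
noncomputable def As (x : ℝ) (u : ℝ) : ℂ :=
  Complex.exp (((σ : ℂ) + I * u - x) ^ 2 / 2) * ∏ k, ((σ : ℂ) + I * u - a k) ^ (n k)

/-- the `θ`-factor after removing the pole -/
noncomputable def Bs (y : ℝ) (θ : ℝ) : ℂ :=
  (circleMap 0 R θ * I) *
    (Complex.exp (-(circleMap (c : ℂ) R θ - y) ^ 2 / 2) *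
      ∏ l, (circleMap (c : ℂ) R θ - a l) ^ (-(n l : ℤ)))

variable {a n σ c R}

lemma tsub_norm (hc : ∀ l, |a l - c| < R) (k : Fin m) (θ : ℝ) :
    R - |a k - c| ≤ ‖circleMap (c : ℂ) R θ - a k‖ := by
  have h1 : ‖circleMap (c : ℂ) R θ - c‖ = |R| := by
    rw [circleMap_sub_center, norm_circleMap_zero]
  have h2 : ‖((a k : ℂ)) - c‖ = |a k - c| := by
    rw [← Complex.ofReal_sub, Complex.norm_real, Real.norm_eq_abs]
  have h3 := norm_sub_norm_le (circleMap (c : ℂ) R θ - c) ((a k : ℂ) - c)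
  have h4 : circleMap (c : ℂ) R θ - c - ((a k : ℂ) - c) = circleMap (c : ℂ) R θ - a k := by ring
  rw [h4, h1, h2] at h3
  have hR0 : 0 < R := lt_of_le_of_lt (abs_nonneg _) (hc k)
  rw [abs_of_pos hR0] at h3
  linarith

lemma tsub_ne (hc : ∀ l, |a l - c| < R) (k : Fin m) (θ : ℝ) :
    circleMap (c : ℂ) R θ - a k ≠ 0 := by
  intro h
  have := tsub_norm hc k θ
  rw [h, norm_zero] at this
  linarith [hc k]

lemma re_circleMap (θ : ℝ) : (circleMap (c : ℂ) R θ).re = c + R * Real.cos θ := by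
  simp [circleMap, Complex.exp_ofReal_mul_I_re]

lemma stsub_norm (hσ : R < |σ - c|) (hR : 0 < R) (u θ : ℝ) :
    |σ - c| - R ≤ ‖(σ : ℂ) + I * u - circleMap (c : ℂ) R θ‖ := by
  have h1 : ((σ : ℂ) + I * u - circleMap (c : ℂ) R θ).re = σ - (c + R * Real.cos θ) := by
    rw [Complex.sub_re, Complex.add_re, Complex.ofReal_re, re_circleMap]
    simp
  have h2 := Complex.abs_re_le_norm ((σ : ℂ) + I * u - circleMap (c : ℂ) R θ)
  rw [h1] at h2
  have h3 : |σ - c| - |R * Real.cos θ| ≤ |σ - c - R * Real.cos θ| :=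
    le_trans (by linarith [abs_sub_abs_le_abs_sub (σ - c) (R * Real.cos θ)]) (le_refl _)
  have h4 : |R * Real.cos θ| ≤ R := by
    rw [abs_mul, abs_of_pos hR]
    calc R * |Real.cos θ| ≤ R * 1 := by
          exact mul_le_mul_of_nonneg_left (Real.abs_cos_le_one θ) hR.le
      _ = R := mul_one R
  have h5 : σ - (c + R * Real.cos θ) = σ - c - R * Real.cos θ := by ring
  rw [h5] at h2
  linarith

lemma stsub_ne (hσ : R < |σ - c|) (hR : 0 < R) (u θ : ℝ) :
    (σ : ℂ) + I * u - circleMap (c : ℂ) R θ ≠ 0 := by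
  intro h
  have := stsub_norm hσ hR u θ
  rw [h, norm_zero] at this
  linarith

lemma continuous_Phi (hσ : R < |σ - c|) (hR : 0 < R) (hc : ∀ l, |a l - c| < R) (x y : ℝ) :
    Continuous (Phi a n σ c R x y) := by
  have hT : Continuous fun q : ℝ × ℝ => circleMap (c : ℂ) R q.2 :=
    (continuous_circleMap _ _).comp continuous_snd
  have hs : Continuous fun q : ℝ × ℝ => (σ : ℂ) + I * q.1 :=
    continuous_const.add (continuous_const.mul (Complex.continuous_ofReal.comp continuous_fst))
  have h1 : Continuous fun q : ℝ × ℝ => circleMap (0 : ℂ) R q.2 * I :=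
    ((continuous_circleMap _ _).comp continuous_snd).mul continuous_const
  have hexp : Continuous fun q : ℝ × ℝ =>
      Complex.exp (((σ : ℂ) + I * q.1 - x) ^ 2 / 2 - (circleMap (c : ℂ) R q.2 - y) ^ 2 / 2) :=
    Complex.continuous_exp.comp
      ((((hs.sub continuous_const).pow 2).div_const 2).sub
        (((hT.sub continuous_const).pow 2).div_const 2))
  have hprod : Continuous fun q : ℝ × ℝ =>
      ∏ k, (((σ : ℂ) + I * q.1 - a k) / (circleMap (c : ℂ) R q.2 - a k)) ^ (n k) := by
    apply continuous_finset_prod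
    intro k _
    exact ((hs.sub continuous_const).div (hT.sub continuous_const)
      (fun q => tsub_ne hc k q.2)).pow (n k)
  have hinv : Continuous fun q : ℝ × ℝ => ((σ : ℂ) + I * q.1 - circleMap (c : ℂ) R q.2)⁻¹ :=
    (hs.sub hT).inv₀ fun q => stsub_ne hσ hR q.1 q.2
  exact h1.mul ((hexp.mul hprod).mul hinv)

end Main

end MH8

open Complex Filter Set Polynomial

namespace MH8

section Main

variable {m : ℕ} (a : Fin m → ℝ) (n : Fin m → ℕ) (σ c R : ℝ)

/-- uniform constant for the kernel bound -/
noncomputable def Ce (σ x y c R : ℝ) : ℝ :=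
  Real.exp ((|σ - x| + 1) ^ 2 / 2) * Real.exp ((R + |c| + |y| + 1) ^ 2 / 2)

noncomputable def Cp (a : Fin m → ℝ) (n : Fin m → ℕ) (σ c R : ℝ) : ℝ :=
  ∏ k, ((|σ| + |a k| + 1) / (R - |a k - c|)) ^ (n k)

noncomputable def Cb (a : Fin m → ℝ) (n : Fin m → ℕ) (σ c R x y : ℝ) : ℝ :=
  R * Ce σ x y c R * Cp a n σ c R * (|σ - c| - R)⁻¹

variable {a n σ c R}

lemma Cp_nonneg (hc : ∀ l, |a l - c| < R) : 0 ≤ Cp a n σ c R := by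
  refine Finset.prod_nonneg fun k _ => pow_nonneg ?_ _
  have := hc k
  have h1 : 0 < R - |a k - c| := by linarith
  positivity

lemma norm_exp_Phi_le (hR : 0 < R) (x y x' y' : ℝ) (hx : |x' - x| ≤ 1) (hy : |y' - y| ≤ 1) (u θ : ℝ) :
    ‖Complex.exp (((σ : ℂ) + I * u - x') ^ 2 / 2 - (circleMap (c : ℂ) R θ - y') ^ 2 / 2)‖
      ≤ Ce σ x y c R * Real.exp (-u ^ 2 / 2) := by
  rw [sub_eq_add_neg, Complex.exp_add, norm_mul]
  have h1 : ‖Complex.exp (((σ : ℂ) + I * u - x') ^ 2 / 2)‖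
      = Real.exp ((σ - x') ^ 2 / 2) * Real.exp (-u ^ 2 / 2) := norm_cexp_vert σ x' u
  have h2 : ‖Complex.exp (-((circleMap (c : ℂ) R θ - y') ^ 2 / 2))‖
      ≤ Real.exp ((R + |c| + |y| + 1) ^ 2 / 2) := by
    rw [Complex.norm_exp]
    apply Real.exp_le_exp.2
    have h3 : (-((circleMap (c : ℂ) R θ - y') ^ 2 / 2)).re
        ≤ ‖(circleMap (c : ℂ) R θ - y') ^ 2 / 2‖ := by
      refine le_trans (Complex.re_le_norm _) ?_
      rw [norm_neg]
    refine h3.trans ?_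
    rw [norm_div, norm_pow]
    have h4 : ‖circleMap (c : ℂ) R θ - y'‖ ≤ R + |c| + |y| + 1 := by
      have e1 : circleMap (c : ℂ) R θ - y' = (circleMap (c : ℂ) R θ - c) + ((c : ℂ) - y') := by
        ring
      rw [e1]
      refine (norm_add_le _ _).trans ?_
      have e2 : ‖circleMap (c : ℂ) R θ - c‖ = |R| := by
        rw [circleMap_sub_center, norm_circleMap_zero]
      have e3 : ‖((c : ℂ)) - y'‖ = |c - y'| := by
        rw [← Complex.ofReal_sub, Complex.norm_real, Real.norm_eq_abs]
      rw [e2, e3]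
      have : |c - y'| ≤ |c| + |y| + 1 := by
        have := abs_sub (c : ℝ) y'
        have h5 : |y'| ≤ |y| + 1 := by
          have := abs_sub_abs_le_abs_sub y' y
          linarith
        calc |c - y'| ≤ |c| + |y'| := abs_sub _ _
          _ ≤ |c| + (|y| + 1) := by linarith
          _ = |c| + |y| + 1 := by ring
      rw [abs_of_pos hR]
      linarith
    have h8 : ‖(2 : ℂ)‖ = 2 := by norm_num
    rw [h8]
    have h9 : (0:ℝ) ≤ R + |c| + |y| + 1 := le_trans (norm_nonneg _) h4
    have := pow_le_pow_left₀ (norm_nonneg _) h4 2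
    linarith
  have h10 : Real.exp ((σ - x') ^ 2 / 2) ≤ Real.exp ((|σ - x| + 1) ^ 2 / 2) := by
    apply Real.exp_le_exp.2
    have h11 : |σ - x'| ≤ |σ - x| + 1 := by
      have := abs_sub_abs_le_abs_sub (σ - x') (σ - x)
      have h12 : |σ - x' - (σ - x)| = |x' - x| := by
        rw [show σ - x' - (σ - x) = -(x' - x) by ring, abs_neg]
      linarith
    nlinarith [abs_nonneg (σ - x'), abs_nonneg (σ - x), _root_.sq_abs (σ - x'),
      _root_.sq_abs (σ - x)]
  rw [h1, Ce]
  calc Real.exp ((σ - x') ^ 2 / 2) * Real.exp (-u ^ 2 / 2)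
        * ‖Complex.exp (-((circleMap (c : ℂ) R θ - y') ^ 2 / 2))‖
      ≤ Real.exp ((|σ - x| + 1) ^ 2 / 2) * Real.exp (-u ^ 2 / 2)
        * Real.exp ((R + |c| + |y| + 1) ^ 2 / 2) := by
        refine mul_le_mul (mul_le_mul_of_nonneg_right h10 (Real.exp_pos _).le) h2
          (norm_nonneg _) (by positivity)
    _ = Real.exp ((|σ - x| + 1) ^ 2 / 2) * Real.exp ((R + |c| + |y| + 1) ^ 2 / 2)
        * Real.exp (-u ^ 2 / 2) := by ring

lemma norm_prod_Phi_le (hc : ∀ l, |a l - c| < R) (u θ : ℝ) :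
    ‖∏ k, (((σ : ℂ) + I * u - a k) / (circleMap (c : ℂ) R θ - a k)) ^ (n k)‖
      ≤ Cp a n σ c R * (1 + |u|) ^ (∑ k, n k) := by
  have key : ∀ k : Fin m,
      ‖(((σ : ℂ) + I * u - a k) / (circleMap (c : ℂ) R θ - a k)) ^ (n k)‖
        ≤ (((|σ| + |a k| + 1) / (R - |a k - c|)) * (1 + |u|)) ^ (n k) := by
    intro k
    rw [norm_pow]
    refine pow_le_pow_left₀ (norm_nonneg _) ?_ _
    rw [norm_div]
    have hd : 0 < R - |a k - c| := by linarith [hc k]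
    have hnum : ‖(σ : ℂ) + I * u - a k‖ ≤ (|σ| + |a k| + 1) * (1 + |u|) := by
      have e1 : (σ : ℂ) + I * u - a k = ((σ - a k : ℝ) : ℂ) + I * u := by push_cast; ring
      rw [e1]
      refine (norm_add_le _ _).trans ?_
      have e2 : ‖((σ - a k : ℝ) : ℂ)‖ = |σ - a k| := by
        rw [Complex.norm_real, Real.norm_eq_abs]
      have e3 : ‖I * (u : ℂ)‖ = |u| := by
        rw [norm_mul, Complex.norm_I, one_mul, Complex.norm_real, Real.norm_eq_abs]
      rw [e2, e3]
      have h4 : |σ - a k| ≤ |σ| + |a k| := abs_sub σ (a k)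
      have := abs_nonneg u
      nlinarith [abs_nonneg σ, abs_nonneg (a k)]
    have hb := tsub_norm hc k θ
    have step := div_le_div₀ (by positivity) hnum hd hb
    refine step.trans_eq ?_
    ring
  calc ‖∏ k, (((σ : ℂ) + I * u - a k) / (circleMap (c : ℂ) R θ - a k)) ^ (n k)‖
      = ∏ k, ‖(((σ : ℂ) + I * u - a k) / (circleMap (c : ℂ) R θ - a k)) ^ (n k)‖ :=
        norm_prod _ _
    _ ≤ ∏ k, (((|σ| + |a k| + 1) / (R - |a k - c|)) * (1 + |u|)) ^ (n k) :=
        Finset.prod_le_prod (fun k _ => norm_nonneg _) (fun k _ => key k)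
    _ = Cp a n σ c R * (1 + |u|) ^ (∑ k, n k) := by
        rw [Cp, ← Finset.prod_pow_eq_pow_sum, ← Finset.prod_mul_distrib]
        refine Finset.prod_congr rfl fun k _ => ?_
        rw [mul_pow]

end Main

end MH8

open Complex Filter Set Polynomial

namespace MH8

section Main

variable {m : ℕ} {a : Fin m → ℝ} {n : Fin m → ℕ} {σ c R : ℝ}

lemma norm_tsub_y (hR : 0 < R) {y y' : ℝ} (hy : |y' - y| ≤ 1) (θ : ℝ) :
    ‖circleMap (c : ℂ) R θ - y'‖ ≤ R + |c| + |y| + 1 := by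
  have e1 : circleMap (c : ℂ) R θ - y' = (circleMap (c : ℂ) R θ - c) + ((c : ℂ) - y') := by ring
  rw [e1]
  refine (norm_add_le _ _).trans ?_
  have e2 : ‖circleMap (c : ℂ) R θ - c‖ = |R| := by
    rw [circleMap_sub_center, norm_circleMap_zero]
  have e3 : ‖((c : ℂ)) - y'‖ = |c - y'| := by
    rw [← Complex.ofReal_sub, Complex.norm_real, Real.norm_eq_abs]
  rw [e2, e3, abs_of_pos hR]
  have h5 : |y'| ≤ |y| + 1 := by
    have := abs_sub_abs_le_abs_sub y' y
    linarith
  have h4 : |c - y'| ≤ |c| + |y'| := abs_sub c y'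
  linarith

lemma Cb_nonneg (hσ : R < |σ - c|) (hR : 0 < R) (hc : ∀ l, |a l - c| < R) (x y : ℝ) :
    0 ≤ Cb a n σ c R x y := by
  have h1 : 0 < |σ - c| - R := by linarith
  have h2 := Cp_nonneg (n := n) (σ := σ) hc
  have h3 : (0:ℝ) ≤ Ce σ x y c R := by rw [Ce]; positivity
  have : (0:ℝ) ≤ (|σ - c| - R)⁻¹ := by positivity
  rw [Cb]
  have := hR.le
  positivity

lemma norm_Phi_le (hσ : R < |σ - c|) (hR : 0 < R) (hc : ∀ l, |a l - c| < R)
    (x y : ℝ) {x' y' : ℝ} (hx : |x' - x| ≤ 1) (hy : |y' - y| ≤ 1) (q : ℝ × ℝ) :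
    ‖Phi a n σ c R x' y' q‖ ≤ Cb a n σ c R x y * gb (∑ k, n k) q.1 := by
  have h0 : ‖circleMap (0 : ℂ) R q.2 * I‖ = R := by
    rw [norm_mul, Complex.norm_I, mul_one, norm_circleMap_zero, abs_of_pos hR]
  have hE := norm_exp_Phi_le (σ := σ) (c := c) hR x y x' y' hx hy q.1 q.2
  have hP := norm_prod_Phi_le (n := n) (σ := σ) hc q.1 q.2
  have hV : ‖((σ : ℂ) + I * q.1 - circleMap (c : ℂ) R q.2)⁻¹‖ ≤ (|σ - c| - R)⁻¹ := by
    rw [norm_inv]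
    have hd : 0 < |σ - c| - R := by linarith
    exact inv_anti₀ hd (stsub_norm hσ hR q.1 q.2)
  have hCe : (0:ℝ) ≤ Ce σ x y c R := by rw [Ce]; positivity
  have hCp := Cp_nonneg (n := n) (σ := σ) hc
  calc ‖Phi a n σ c R x' y' q‖
      = R * (‖Complex.exp (((σ : ℂ) + I * q.1 - x') ^ 2 / 2
            - (circleMap (c : ℂ) R q.2 - y') ^ 2 / 2)‖
          * ‖∏ k, (((σ : ℂ) + I * q.1 - a k) / (circleMap (c : ℂ) R q.2 - a k)) ^ (n k)‖
          * ‖((σ : ℂ) + I * q.1 - circleMap (c : ℂ) R q.2)⁻¹‖) := by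
        rw [Phi, norm_mul, h0, norm_mul, norm_mul]
    _ ≤ R * ((Ce σ x y c R * Real.exp (-q.1 ^ 2 / 2))
          * (Cp a n σ c R * (1 + |q.1|) ^ (∑ k, n k)) * (|σ - c| - R)⁻¹) := by
        refine mul_le_mul_of_nonneg_left ?_ hR.le
        refine mul_le_mul (mul_le_mul hE hP (norm_nonneg _) (by positivity)) hV
          (norm_nonneg _) ?_
        have : (0:ℝ) ≤ (1 + |q.1|) ^ (∑ k, n k) := by positivity
        positivity
    _ = Cb a n σ c R x y * gb (∑ k, n k) q.1 := by
        rw [Cb, gb]; ring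

lemma gb_succ (d : ℕ) (u : ℝ) : gb (d + 1) u = (1 + |u|) * gb d u := by
  rw [gb, gb, pow_succ]; ring

lemma integrable_gb_pm (d : ℕ) (C : ℝ) :
    Integrable (fun q : ℝ × ℝ => C * gb d q.1) pm := by
  have h1 : Integrable (fun u : ℝ => C * gb d u) := (integrable_gb d).const_mul C
  have h2 : IntegrableOn (fun _ : ℝ => (1 : ℝ)) (Ioc 0 (2 * Real.pi)) volume :=
    integrableOn_const measure_Ioc_lt_top.ne
  have := h1.mul_prod h2
  simpa [pm] using this

lemma integrable_Phi (hσ : R < |σ - c|) (hR : 0 < R) (hc : ∀ l, |a l - c| < R)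
    (x y : ℝ) : Integrable (Phi a n σ c R x y) pm := by
  refine Integrable.mono' (integrable_gb_pm (∑ k, n k) (Cb a n σ c R x y))
    ((continuous_Phi hσ hR hc x y).aestronglyMeasurable) ?_
  filter_upwards with q
  exact norm_Phi_le hσ hR hc x y (by simp) (by simp) q

lemma Phi_hasDerivAt_x (y : ℝ) (q : ℝ × ℝ) (x' : ℝ) :
    HasDerivAt (fun t : ℝ => Phi a n σ c R t y q)
      (((x' : ℂ) - ((σ : ℂ) + I * q.1)) * Phi a n σ c R x' y q) x' := by
  set s : ℂ := (σ : ℂ) + I * q.1 with hs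
  set B : ℂ := (circleMap (c : ℂ) R q.2 - y) ^ 2 / 2 with hB
  have hE : HasDerivAt (fun z : ℂ => Complex.exp ((s - z) ^ 2 / 2 - B))
      (((x' : ℂ) - s) * Complex.exp ((s - (x' : ℂ)) ^ 2 / 2 - B)) (x' : ℂ) := by
    have h1 : HasDerivAt (fun z : ℂ => (s - z) ^ 2 / 2 - B)
        ((2 * (s - (x' : ℂ)) ^ 1 * (-1)) / 2) (x' : ℂ) :=
      ((((hasDerivAt_id (x' : ℂ)).const_sub s).pow 2).div_const 2).sub_const B
    have h2 := h1.cexp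
    refine h2.congr_deriv ?_
    ring
  have hE' : HasDerivAt (fun t : ℝ => Complex.exp ((s - (t : ℂ)) ^ 2 / 2 - B))
      (((x' : ℂ) - s) * Complex.exp ((s - (x' : ℂ)) ^ 2 / 2 - B)) x' := hE.comp_ofReal
  have h3 := ((hE'.mul_const
      (∏ k, ((s - a k) / (circleMap (c : ℂ) R q.2 - a k)) ^ (n k))).mul_const
      ((s - circleMap (c : ℂ) R q.2)⁻¹)).const_mul (circleMap 0 R q.2 * I)
  have hfun : (fun t : ℝ => Phi a n σ c R t y q)
      = fun t : ℝ => circleMap 0 R q.2 * I *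
          ((Complex.exp ((s - (t : ℂ)) ^ 2 / 2 - B)
            * ∏ k, ((s - a k) / (circleMap (c : ℂ) R q.2 - a k)) ^ (n k))
            * (s - circleMap (c : ℂ) R q.2)⁻¹) := by
    funext t
    simp only [Phi, hs, hB]
  rw [hfun]
  refine h3.congr_deriv ?_
  simp only [Phi, hs, hB]
  ring
  
lemma Phi_hasDerivAt_y (x : ℝ) (q : ℝ × ℝ) (y' : ℝ) :
    HasDerivAt (fun t : ℝ => Phi a n σ c R x t q)
      ((circleMap (c : ℂ) R q.2 - (y' : ℂ)) * Phi a n σ c R x y' q) y' := by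
  set s : ℂ := (σ : ℂ) + I * q.1 with hs
  set A : ℂ := (s - (x : ℂ)) ^ 2 / 2 with hA
  set t0 : ℂ := circleMap (c : ℂ) R q.2 with ht0
  have hE : HasDerivAt (fun z : ℂ => Complex.exp (A - (t0 - z) ^ 2 / 2))
      ((t0 - (y' : ℂ)) * Complex.exp (A - (t0 - (y' : ℂ)) ^ 2 / 2)) (y' : ℂ) := by
    have h1 : HasDerivAt (fun z : ℂ => A - (t0 - z) ^ 2 / 2)
        (-((2 * (t0 - (y' : ℂ)) ^ 1 * (-1)) / 2)) (y' : ℂ) :=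
      (((((hasDerivAt_id (y' : ℂ)).const_sub t0).pow 2).div_const 2)).const_sub A
    have h2 := h1.cexp
    refine h2.congr_deriv ?_
    ring
  have hE' := hE.comp_ofReal
  have h3 := ((hE'.mul_const
      (∏ k, ((s - a k) / (t0 - a k)) ^ (n k))).mul_const
      ((s - t0)⁻¹)).const_mul (circleMap 0 R q.2 * I)
  have hfun : (fun t : ℝ => Phi a n σ c R x t q)
      = fun t : ℝ => circleMap 0 R q.2 * I *
          ((Complex.exp (A - (t0 - (t : ℂ)) ^ 2 / 2)
            * ∏ k, ((s - a k) / (t0 - a k)) ^ (n k))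
            * (s - t0)⁻¹) := by
    funext t
    simp only [Phi, hs, hA, ht0]
  rw [hfun]
  refine h3.congr_deriv ?_
  simp only [Phi, hs, hA, ht0]
  ring

lemma norm_Phi_x_le (hσ : R < |σ - c|) (hR : 0 < R) (hc : ∀ l, |a l - c| < R)
    (x y : ℝ) {x' y' : ℝ} (hx : |x' - x| ≤ 1) (hy : |y' - y| ≤ 1) (q : ℝ × ℝ) :
    ‖((x' : ℂ) - ((σ : ℂ) + I * q.1)) * Phi a n σ c R x' y' q‖
      ≤ (|x - σ| + 2) * Cb a n σ c R x y * gb (∑ k, n k + 1) q.1 := by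
  rw [norm_mul]
  have h1 : ‖(x' : ℂ) - ((σ : ℂ) + I * q.1)‖ ≤ (|x - σ| + 2) * (1 + |q.1|) := by
    have e1 : (x' : ℂ) - ((σ : ℂ) + I * q.1) = ((x' - σ : ℝ) : ℂ) + (-I) * q.1 := by
      push_cast; ring
    rw [e1]
    refine (norm_add_le _ _).trans ?_
    have e2 : ‖((x' - σ : ℝ) : ℂ)‖ = |x' - σ| := by
      rw [Complex.norm_real, Real.norm_eq_abs]
    have e3 : ‖(-I) * (q.1 : ℂ)‖ = |q.1| := by
      rw [norm_mul, norm_neg, Complex.norm_I, one_mul, Complex.norm_real, Real.norm_eq_abs]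
    rw [e2, e3]
    have h2 : |x' - σ| ≤ |x - σ| + 1 := by
      have := abs_sub_abs_le_abs_sub (x' - σ) (x - σ)
      have h3 : |x' - σ - (x - σ)| = |x' - x| := by
        rw [show x' - σ - (x - σ) = x' - x by ring]
      linarith
    nlinarith [abs_nonneg q.1, abs_nonneg (x - σ)]
  have h4 := norm_Phi_le (n := n) hσ hR hc x y hx hy q
  have h5 := Cb_nonneg (n := n) hσ hR hc x y
  calc ‖(x' : ℂ) - ((σ : ℂ) + I * q.1)‖ * ‖Phi a n σ c R x' y' q‖
      ≤ ((|x - σ| + 2) * (1 + |q.1|)) * (Cb a n σ c R x y * gb (∑ k, n k) q.1) :=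
        mul_le_mul h1 h4 (norm_nonneg _) (by positivity)
    _ = (|x - σ| + 2) * Cb a n σ c R x y * gb (∑ k, n k + 1) q.1 := by
        rw [gb_succ]; ring

lemma norm_Phi_y_le (hσ : R < |σ - c|) (hR : 0 < R) (hc : ∀ l, |a l - c| < R)
    (x y : ℝ) {x' y' : ℝ} (hx : |x' - x| ≤ 1) (hy : |y' - y| ≤ 1) (q : ℝ × ℝ) :
    ‖(circleMap (c : ℂ) R q.2 - (y' : ℂ)) * Phi a n σ c R x' y' q‖
      ≤ (R + |c| + |y| + 1) * Cb a n σ c R x y * gb (∑ k, n k) q.1 := by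
  rw [norm_mul]
  have h1 := norm_tsub_y (c := c) hR hy q.2
  have h4 := norm_Phi_le (n := n) hσ hR hc x y hx hy q
  have h5 := Cb_nonneg (n := n) hσ hR hc x y
  calc ‖circleMap (c : ℂ) R q.2 - (y' : ℂ)‖ * ‖Phi a n σ c R x' y' q‖
      ≤ (R + |c| + |y| + 1) * (Cb a n σ c R x y * gb (∑ k, n k) q.1) :=
        mul_le_mul h1 h4 (norm_nonneg _) (by positivity)
    _ = _ := by ring

end Main

end MH8

open Complex Filter Set Polynomial

namespace MH8

section Main

variable {m : ℕ} {a : Fin m → ℝ} {n : Fin m → ℕ} {σ c R : ℝ}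

lemma intPhi_hasDerivAt_x (hσ : R < |σ - c|) (hR : 0 < R) (hc : ∀ l, |a l - c| < R)
    (x y : ℝ) :
    Integrable (fun q : ℝ × ℝ => ((x : ℂ) - ((σ : ℂ) + I * q.1)) * Phi a n σ c R x y q) pm ∧
    HasDerivAt (fun x' : ℝ => ∫ q, Phi a n σ c R x' y q ∂pm)
      (∫ q, ((x : ℂ) - ((σ : ℂ) + I * q.1)) * Phi a n σ c R x y q ∂pm) x := by
  have hs : Continuous fun q : ℝ × ℝ => (σ : ℂ) + I * q.1 :=
    continuous_const.add (continuous_const.mul (Complex.continuous_ofReal.comp continuous_fst))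
  refine hasDerivAt_integral_of_dominated_loc_of_deriv_le (Metric.ball_mem_nhds _ one_pos)
    (Eventually.of_forall fun x' => (continuous_Phi hσ hR hc x' y).aestronglyMeasurable)
    (integrable_Phi hσ hR hc x y)
    ((continuous_const.sub hs).mul (continuous_Phi hσ hR hc x y)).aestronglyMeasurable
    (Eventually.of_forall ?_)
    (integrable_gb_pm (∑ k, n k + 1) ((|x - σ| + 2) * Cb a n σ c R x y))
    (Eventually.of_forall fun q x' _ => Phi_hasDerivAt_x y q x')
  intro q x' hx'
  have hx1 : |x' - x| ≤ 1 := by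
    rw [Metric.mem_ball, Real.dist_eq] at hx'
    exact hx'.le
  exact norm_Phi_x_le hσ hR hc x y hx1 (by simp) q

lemma intPhi_hasDerivAt_y (hσ : R < |σ - c|) (hR : 0 < R) (hc : ∀ l, |a l - c| < R)
    (x y : ℝ) :
    Integrable (fun q : ℝ × ℝ => (circleMap (c : ℂ) R q.2 - (y : ℂ)) * Phi a n σ c R x y q) pm ∧
    HasDerivAt (fun y' : ℝ => ∫ q, Phi a n σ c R x y' q ∂pm)
      (∫ q, (circleMap (c : ℂ) R q.2 - (y : ℂ)) * Phi a n σ c R x y q ∂pm) y := by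
  have hT : Continuous fun q : ℝ × ℝ => circleMap (c : ℂ) R q.2 :=
    (continuous_circleMap _ _).comp continuous_snd
  refine hasDerivAt_integral_of_dominated_loc_of_deriv_le (Metric.ball_mem_nhds _ one_pos)
    (Eventually.of_forall fun y' => (continuous_Phi hσ hR hc x y').aestronglyMeasurable)
    (integrable_Phi hσ hR hc x y)
    ((hT.sub continuous_const).mul (continuous_Phi hσ hR hc x y)).aestronglyMeasurable
    (Eventually.of_forall ?_)
    (integrable_gb_pm (∑ k, n k) ((R + |c| + |y| + 1) * Cb a n σ c R x y))
    (Eventually.of_forall fun q y' _ => Phi_hasDerivAt_y x q y')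
  intro q y' hy'
  have hy1 : |y' - y| ≤ 1 := by
    rw [Metric.mem_ball, Real.dist_eq] at hy'
    exact hy'.le
  exact norm_Phi_y_le hσ hR hc x y (by simp) hy1 q

lemma circle_to_Ioc (x y u : ℝ) :
    (∮ t in C((c : ℂ), R),
        Complex.exp (((σ : ℂ) + Complex.I * u - x) ^ 2 / 2 - (t - (y : ℂ)) ^ 2 / 2) *
          (∏ k, (((σ : ℂ) + Complex.I * u - a k) / (t - (a k : ℂ))) ^ (n k)) *
          ((σ : ℂ) + Complex.I * u - t)⁻¹)
      = ∫ θ in Ioc 0 (2 * Real.pi), Phi a n σ c R x y (u, θ) := by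
  rw [circleIntegral, intervalIntegral.integral_of_le Real.two_pi_pos.le]
  refine setIntegral_congr_fun measurableSet_Ioc fun θ _ => ?_
  simp only [deriv_circleMap, smul_eq_mul, Phi]

lemma mhK_eq (hσ : R < |σ - c|) (hR : 0 < R) (hc : ∀ l, |a l - c| < R) (x y : ℝ) :
    mhK a n σ c R x y
      = ((2 * (Real.pi : ℂ) * I) ^ 2)⁻¹ * (∫ q, Phi a n σ c R x y q ∂pm) * I := by
  have h1 : ∀ u : ℝ,
      (∮ t in C((c : ℂ), R),
        Complex.exp (((σ : ℂ) + Complex.I * u - x) ^ 2 / 2 - (t - (y : ℂ)) ^ 2 / 2) *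
          (∏ k, (((σ : ℂ) + Complex.I * u - a k) / (t - (a k : ℂ))) ^ (n k)) *
          ((σ : ℂ) + Complex.I * u - t)⁻¹)
      = ∫ θ in Ioc 0 (2 * Real.pi), Phi a n σ c R x y (u, θ) := circle_to_Ioc x y
  have hmain : (∫ u : ℝ, (∮ t in C((c : ℂ), R),
        Complex.exp (((σ : ℂ) + Complex.I * u - x) ^ 2 / 2 - (t - (y : ℂ)) ^ 2 / 2) *
          (∏ k, (((σ : ℂ) + Complex.I * u - a k) / (t - (a k : ℂ))) ^ (n k)) *
          ((σ : ℂ) + Complex.I * u - t)⁻¹) * Complex.I)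
      = (∫ q, Phi a n σ c R x y q ∂pm) * I :=
  calc ∫ u : ℝ, (∮ t in C((c : ℂ), R),
        Complex.exp (((σ : ℂ) + Complex.I * u - x) ^ 2 / 2 - (t - (y : ℂ)) ^ 2 / 2) *
          (∏ k, (((σ : ℂ) + Complex.I * u - a k) / (t - (a k : ℂ))) ^ (n k)) *
          ((σ : ℂ) + Complex.I * u - t)⁻¹) * I
      = (∫ u : ℝ, ∫ θ in Ioc 0 (2 * Real.pi), Phi a n σ c R x y (u, θ)) * I := by
        rw [← integral_mul_const]
        refine integral_congr_ae (Eventually.of_forall fun u => ?_)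
        simp only [h1]
    _ = (∫ q, Phi a n σ c R x y q ∂pm) * I := by
        congr 1
        have hint : Integrable (Function.uncurry fun u θ => Phi a n σ c R x y (u, θ)) pm := by
          have := integrable_Phi hσ hR hc x y (n := n)
          refine this.congr ?_
          filter_upwards with q
          rfl
        have := MeasureTheory.integral_integral hint
        simpa [pm] using this
  rw [mhK, hmain]
  ring

lemma As_eq_vf (x : ℝ) :
    (fun u : ℝ => As a n σ x u)
      = fun u : ℝ => vf (∏ k, (X - Polynomial.C ((a k : ℂ))) ^ (n k)) x ((σ : ℂ) + I * u) := by
  funext u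
  simp only [As, vf]
  rw [Polynomial.eval_prod]
  simp only [eval_pow, eval_sub, eval_X, eval_C]
  ring

lemma integrable_As (x : ℝ) : Integrable (fun u : ℝ => As a n σ x u) := by
  rw [As_eq_vf]
  exact vf_integrable _ _ _

lemma integral_As (x : ℝ) :
    ∫ u : ℝ, As a n σ x u
      = ∫ u : ℝ, Complex.exp (-(u : ℂ) ^ 2 / 2) *
          ∏ k, ((x : ℂ) - (a k : ℂ) + Complex.I * u) ^ (n k) := by
  rw [As_eq_vf]
  rw [vshift_const (∏ k, (X - Polynomial.C ((a k : ℂ))) ^ (n k)) x σ x]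
  refine integral_congr_ae (Eventually.of_forall fun u => ?_)
  simp only [vf]
  rw [Polynomial.eval_prod]
  simp only [eval_pow, eval_sub, eval_X, eval_C]
  have h1 : ((x : ℂ) + I * u - x) ^ 2 / 2 = -(u : ℂ) ^ 2 / 2 := by
    rw [show ((x : ℂ) + I * u - x) = I * u by ring, mul_pow, I_sq]
    ring
  have h2 : (∏ k, ((x : ℂ) + I * u - (a k : ℂ)) ^ (n k))
      = ∏ k, ((x : ℂ) - (a k : ℂ) + I * u) ^ (n k) :=
    Finset.prod_congr rfl fun k _ => by
      rw [show ((x : ℂ) + I * u - (a k : ℂ)) = ((x : ℂ) - (a k : ℂ) + I * u) from by ring]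
  rw [h1, h2]
  ring

lemma continuous_Bs (hc : ∀ l, |a l - c| < R) (y : ℝ) :
    Continuous (Bs a n c R y) := by
  have hT : Continuous fun θ : ℝ => circleMap (c : ℂ) R θ := continuous_circleMap _ _
  refine (((continuous_circleMap _ _).mul continuous_const)).mul
    ((Complex.continuous_exp.comp (by fun_prop)).mul
      (continuous_finset_prod _ fun l _ =>
        (hT.sub continuous_const).zpow₀ _ fun θ => Or.inl (tsub_ne hc l θ)))

lemma integrableOn_Bs (hc : ∀ l, |a l - c| < R) (y : ℝ) :
    IntegrableOn (Bs a n c R y) (Ioc 0 (2 * Real.pi)) volume :=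
  (continuous_Bs hc y).integrableOn_Ioc

lemma integral_Bs (y : ℝ) :
    ∫ θ in Ioc 0 (2 * Real.pi), Bs a n c R y θ
      = ∮ t in C((c : ℂ), R),
          Complex.exp (-(t - (y : ℂ)) ^ 2 / 2) * ∏ l, (t - (a l : ℂ)) ^ (-(n l : ℤ)) := by
  rw [circleIntegral, intervalIntegral.integral_of_le Real.two_pi_pos.le]
  refine (setIntegral_congr_fun measurableSet_Ioc fun θ _ => ?_).symm
  simp only [deriv_circleMap, smul_eq_mul, Bs]

lemma Phi_sum_eq (hσ : R < |σ - c|) (hR : 0 < R) (hc : ∀ l, |a l - c| < R)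
    (x y : ℝ) (q : ℝ × ℝ) :
    ((x : ℂ) - ((σ : ℂ) + I * q.1)) * Phi a n σ c R x y q
        + (circleMap (c : ℂ) R q.2 - (y : ℂ)) * Phi a n σ c R x y q
      = ((x : ℂ) - (y : ℂ)) * Phi a n σ c R x y q - As a n σ x q.1 * Bs a n c R y q.2 := by
  have h2 : (σ : ℂ) + I * q.1 - circleMap (c : ℂ) R q.2 ≠ 0 := stsub_ne hσ hR q.1 q.2
  simp only [Phi, As, Bs]
  have hexp : Complex.exp (((σ : ℂ) + I * q.1 - x) ^ 2 / 2
        - (circleMap (c : ℂ) R q.2 - y) ^ 2 / 2)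
      = Complex.exp (((σ : ℂ) + I * q.1 - x) ^ 2 / 2)
        * Complex.exp (-(circleMap (c : ℂ) R q.2 - y) ^ 2 / 2) := by
    rw [← Complex.exp_add]
    congr 1
    ring
  have hprod : (∏ k, (((σ : ℂ) + I * q.1 - a k) / (circleMap (c : ℂ) R q.2 - a k)) ^ (n k))
      = (∏ k, ((σ : ℂ) + I * q.1 - a k) ^ (n k))
        * ∏ k, (circleMap (c : ℂ) R q.2 - a k) ^ (-(n k : ℤ)) := by
    rw [← Finset.prod_mul_distrib]
    refine Finset.prod_congr rfl fun k _ => ?_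
    rw [div_pow, zpow_neg, zpow_natCast, div_eq_mul_inv]
  rw [hexp, hprod]
  set E1 := Complex.exp (((σ : ℂ) + I * q.1 - x) ^ 2 / 2)
  set E2 := Complex.exp (-(circleMap (c : ℂ) R q.2 - y) ^ 2 / 2)
  set P1 := ∏ k, ((σ : ℂ) + I * q.1 - a k) ^ (n k)
  set P2 := ∏ k, (circleMap (c : ℂ) R q.2 - a k) ^ (-(n k : ℤ))
  set K1 := circleMap 0 R q.2 * I
  set s := (σ : ℂ) + I * q.1
  set t := circleMap (c : ℂ) R q.2
  field_simp
  ring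

end Main

end MH8

open MeasureTheory Finset Complex Filter Set Polynomial MH8

theorem stmt_8 (m : ℕ) (hm : 1 ≤ m) (a : Fin m → ℝ) (ha : Function.Injective a)
    (n : Fin m → ℕ) (hn : ∀ k, 1 ≤ n k)
    (σ c R : ℝ) (hR : 0 < R) (hc : ∀ l, |a l - c| < R) (hσ : R < |σ - c|) :
    ∀ x y : ℝ, ∃ Kx Ky : ℂ,
      HasDerivAt (fun x' : ℝ => mhK a n σ c R x' y) Kx x ∧
      HasDerivAt (fun y' : ℝ => mhK a n σ c R x y') Ky y ∧
      Kx + Ky = ((x : ℂ) - (y : ℂ)) * mhK a n σ c R x y - mhP a n x * mhQ a c R n y := by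
  intro x y
  have hx := intPhi_hasDerivAt_x (a := a) (n := n) hσ hR hc x y
  have hy := intPhi_hasDerivAt_y (a := a) (n := n) hσ hR hc x y
  set C : ℂ := ((2 * (Real.pi : ℂ) * I) ^ 2)⁻¹ with hCdef
  refine ⟨C * (∫ q, ((x : ℂ) - ((σ : ℂ) + I * q.1)) * Phi a n σ c R x y q ∂pm) * I,
    C * (∫ q, (circleMap (c : ℂ) R q.2 - (y : ℂ)) * Phi a n σ c R x y q ∂pm) * I, ?_, ?_, ?_⟩
  · have hfun : (fun x' : ℝ => mhK a n σ c R x' y)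
        = fun x' => C * (∫ q, Phi a n σ c R x' y q ∂pm) * I :=
      funext fun x' => mhK_eq hσ hR hc x' y
    rw [hfun]
    exact (hx.2.const_mul C).mul_const I
  · have hfun : (fun y' : ℝ => mhK a n σ c R x y')
        = fun y' => C * (∫ q, Phi a n σ c R x y' q ∂pm) * I :=
      funext fun y' => mhK_eq hσ hR hc x y'
    rw [hfun]
    exact (hy.2.const_mul C).mul_const I
  · -- the functional equation
    have hint1 : Integrable (fun q : ℝ × ℝ => ((x : ℂ) - (y : ℂ)) * Phi a n σ c R x y q) pm :=
      (integrable_Phi hσ hR hc x y).const_mul _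
    have hint2 : Integrable (fun q : ℝ × ℝ => As a n σ x q.1 * Bs a n c R y q.2) pm :=
      (integrable_As x).mul_prod (integrableOn_Bs hc y)
    have key : (∫ q, ((x : ℂ) - ((σ : ℂ) + I * q.1)) * Phi a n σ c R x y q ∂pm)
          + (∫ q, (circleMap (c : ℂ) R q.2 - (y : ℂ)) * Phi a n σ c R x y q ∂pm)
        = ((x : ℂ) - (y : ℂ)) * (∫ q, Phi a n σ c R x y q ∂pm)
          - (∫ u : ℝ, As a n σ x u) * ∫ θ in Ioc 0 (2 * Real.pi), Bs a n c R y θ := by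
      rw [← integral_add hx.1 hy.1]
      have hpt : ∀ q : ℝ × ℝ,
          ((x : ℂ) - ((σ : ℂ) + I * q.1)) * Phi a n σ c R x y q
            + (circleMap (c : ℂ) R q.2 - (y : ℂ)) * Phi a n σ c R x y q
          = ((x : ℂ) - (y : ℂ)) * Phi a n σ c R x y q
            - As a n σ x q.1 * Bs a n c R y q.2 := Phi_sum_eq hσ hR hc x y
      rw [integral_congr_ae (Eventually.of_forall hpt)]
      rw [integral_sub hint1 hint2]
      rw [integral_const_mul]
      congr 1
      exact integral_prod_mul (μ := (volume : Measure ℝ))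
        (ν := (volume : Measure ℝ).restrict (Ioc 0 (2 * Real.pi))) (As a n σ x) (Bs a n c R y)
    have hsne : (Real.sqrt (2 * Real.pi) : ℂ) ≠ 0 := by
      simp only [ne_eq, Complex.ofReal_eq_zero]
      positivity
    have hP : (∫ u : ℝ, As a n σ x u) = (Real.sqrt (2 * Real.pi) : ℂ) * mhP a n x := by
      rw [integral_As, mhP, ← mul_assoc, mul_inv_cancel₀ hsne, one_mul]
    have hQ : (∫ θ in Ioc 0 (2 * Real.pi), Bs a n c R y θ)
        = ((Real.sqrt (2 * Real.pi) : ℂ) * (2 * (Real.pi : ℂ) * I)) * mhQ a c R n y := by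
      rw [integral_Bs, mhQ, ← mul_assoc]
      rw [show ((Real.sqrt (2 * Real.pi) : ℂ) * (2 * (Real.pi : ℂ) * I)) *
          ((Real.sqrt (2 * Real.pi) : ℂ) * (2 * Real.pi * Complex.I))⁻¹ = 1 from ?_, one_mul]
      refine mul_inv_cancel₀ ?_
      push_cast
      refine mul_ne_zero hsne (by simp [Real.pi_ne_zero, I_ne_zero])
    have hone : C * ((Real.sqrt (2 * Real.pi) : ℂ) * ((Real.sqrt (2 * Real.pi) : ℂ)
        * (2 * (Real.pi : ℂ) * I))) * I = 1 := by
      have hs2 : (Real.sqrt (2 * Real.pi) : ℂ) * (Real.sqrt (2 * Real.pi) : ℂ)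
          = ((2 * Real.pi : ℝ) : ℂ) := by
        rw [← Complex.ofReal_mul, Real.mul_self_sqrt (by positivity)]
      rw [← mul_assoc (Real.sqrt (2 * Real.pi) : ℂ), hs2, hCdef]
      have h2 : ((2 * Real.pi : ℝ) : ℂ) = 2 * (Real.pi : ℂ) := by push_cast; ring
      rw [h2]
      have hne : (2 * (Real.pi : ℂ) * I) ≠ 0 := by
        simp [Real.pi_ne_zero, I_ne_zero]
      field_simp
    rw [mhK_eq hσ hR hc x y, ← hCdef]
    calc C * (∫ q, ((x : ℂ) - ((σ : ℂ) + I * q.1)) * Phi a n σ c R x y q ∂pm) * I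
          + C * (∫ q, (circleMap (c : ℂ) R q.2 - (y : ℂ)) * Phi a n σ c R x y q ∂pm) * I
        = C * ((∫ q, ((x : ℂ) - ((σ : ℂ) + I * q.1)) * Phi a n σ c R x y q ∂pm)
            + (∫ q, (circleMap (c : ℂ) R q.2 - (y : ℂ)) * Phi a n σ c R x y q ∂pm)) * I := by
          ring
      _ = C * (((x : ℂ) - (y : ℂ)) * (∫ q, Phi a n σ c R x y q ∂pm)
            - ((Real.sqrt (2 * Real.pi) : ℂ) * mhP a n x)
              * (((Real.sqrt (2 * Real.pi) : ℂ) * (2 * (Real.pi : ℂ) * I)) * mhQ a c R n y)) * I := by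
          rw [key, hP, hQ]
      _ = ((x : ℂ) - (y : ℂ)) * (C * (∫ q, Phi a n σ c R x y q ∂pm) * I)
            - mhP a n x * mhQ a c R n y
              * (C * ((Real.sqrt (2 * Real.pi) : ℂ) * ((Real.sqrt (2 * Real.pi) : ℂ)
                * (2 * (Real.pi : ℂ) * I))) * I) := by
          ring
      _ = ((x : ℂ) - (y : ℂ)) * (C * (∫ q, Phi a n σ c R x y q ∂pm) * I)
            - mhP a n x * mhQ a c R n y := by
          rw [hone, mul_one]
end

section
/- Let r satisfy 0 < r < min_k β_k. Then there exists a monic polynomial P of degree |n| = n_1 + ⋯ + n_m with real coefficients such that for every x ∈ ℝ, ∮_{|s|=r} exp(x·s) · s^{−|n|−p−1} · ∏_{k=1}^m (s − β_k)^{n_k} ds = (2πi · ∏_{k=1}^m (−β_k)^{n_k} / (|n|+p)!) · x^p · P(x), where the circle integral is taken counterclockwise over the circle of center 0 and radius r. -/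
open MeasureTheory Finset

lemma myCircleIntegral_sum {ι : Type*} (s : Finset ι) (f : ι → ℂ → ℂ) (c : ℂ) (R : ℝ)
    (h : ∀ i ∈ s, CircleIntegrable (f i) c R) :
    (∮ z in C(c, R), ∑ i ∈ s, f i z) = ∑ i ∈ s, ∮ z in C(c, R), f i z := by
  simp only [circleIntegral, Finset.smul_sum]
  rw [intervalIntegral.integral_finset_sum]
  intro i hi
  exact (h i hi).out

lemma intgr (r : ℝ) (hr : 0 < r) (a x : ℂ) (e : ℤ) :
    CircleIntegrable (fun s : ℂ => a * (Complex.exp (x*s) * s ^ e)) 0 r := by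
  refine ContinuousOn.circleIntegrable hr.le (ContinuousOn.mul continuousOn_const ?_)
  refine ContinuousOn.mul
    (Complex.continuous_exp.comp (continuous_const.mul continuous_id)).continuousOn ?_
  refine ContinuousOn.zpow₀ continuous_id.continuousOn _ fun z hz => Or.inl fun h0 => ?_
  simp only [id_eq] at h0
  rw [mem_sphere_zero_iff_norm, h0] at hz
  simp at hz; linarith

lemma myCircleIntegral_add {f g : ℂ → ℂ} {c : ℂ} {R : ℝ} (hf : CircleIntegrable f c R)
    (hg : CircleIntegrable g c R) :
    (∮ z in C(c, R), f z + g z) = (∮ z in C(c, R), f z) + ∮ z in C(c, R), g z := by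
  simp only [circleIntegral, smul_add, intervalIntegral.integral_add hf.out hg.out]

lemma key (r : ℝ) (hr : 0 < r) (x : ℂ) (q : ℕ) :
    (∮ s in C((0:ℂ), r), Complex.exp (x*s) * s ^ (-(q:ℤ)-1)) =
      2 * Real.pi * Complex.I * x ^ q / q.factorial := by
  have hne : ∀ z ∈ Metric.sphere (0:ℂ) r, z ≠ 0 := by
    intro z hz h0
    rw [mem_sphere_zero_iff_norm, h0] at hz
    simp at hz; linarith
  induction q with
  | zero =>
      have hd : DifferentiableOn ℂ (fun s => Complex.exp (x*s)) (Metric.closedBall (0:ℂ) r) :=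
        (Differentiable.differentiableOn (by fun_prop))
      have h0 : (0:ℂ) ∈ Metric.ball (0:ℂ) r := by simpa using hr
      have h2 := hd.circleIntegral_sub_inv_smul h0
      simp only [sub_zero, smul_eq_mul, mul_zero, Complex.exp_zero, mul_one] at h2
      simp only [Nat.cast_zero, neg_zero, zero_sub]
      calc (∮ s in C((0:ℂ), r), Complex.exp (x*s) * s ^ ((-1 : ℤ)))
          = ∮ s in C((0:ℂ), r), s⁻¹ * Complex.exp (x*s) := by
            refine circleIntegral.integral_congr hr.le fun z hz => ?_
            norm_num [zpow_neg_one, mul_comm]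
        _ = 2 * Real.pi * Complex.I * x ^ 0 / Nat.factorial 0 := by rw [h2]; simp
  | succ q ih =>
      set e : ℤ := -(q:ℤ)-1 with he
      have hE : (-(((q:ℕ)+1 : ℕ) : ℤ) - 1) = e - 1 := by push_cast [he]; ring
      rw [show (((q+1 : ℕ)) : ℤ) = ((q:ℤ)+1) by push_cast; ring] at *
      have hderiv : ∀ z ∈ Metric.sphere (0:ℂ) r,
          HasDerivWithinAt (fun s => Complex.exp (x*s) * s ^ e)
            ((fun z => x * (Complex.exp (x*z) * z ^ e)
              + (e : ℂ) * (Complex.exp (x*z) * z ^ (e-1))) z)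
            (Metric.sphere 0 r) z := by
        intro z hz
        have h1 : HasDerivAt (fun s => Complex.exp (x*s)) (Complex.exp (x*z) * x) z := by
          simpa using ((hasDerivAt_id z).const_mul x).cexp
        have h2 := hasDerivAt_zpow e z (Or.inl (hne z hz))
        have h3 := (h1.mul h2).hasDerivWithinAt (s := Metric.sphere 0 r)
        refine h3.congr_deriv ?_
        beta_reduce
        ring
      have hzero := circleIntegral.integral_eq_zero_of_hasDerivWithinAt hr.le hderiv
      have hsub : (∮ z in C((0:ℂ), r), x * (Complex.exp (x*z) * z ^ e)
              + (e : ℂ) * (Complex.exp (x*z) * z ^ (e-1)))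
          = x * (∮ z in C((0:ℂ), r), Complex.exp (x*z) * z ^ e)
            + (e : ℂ) * (∮ z in C((0:ℂ), r), Complex.exp (x*z) * z ^ (e-1)) := by
        rw [myCircleIntegral_add (intgr r hr x x e) (intgr r hr (e:ℂ) x (e-1)),
          circleIntegral.integral_const_mul, circleIntegral.integral_const_mul]
      rw [hzero, ih] at hsub
      have hq : ((q:ℂ)+1) ≠ 0 := by
        have := Nat.cast_add_one_ne_zero (R := ℂ) q
        simpa using this
      have heC : (e : ℂ) = -((q:ℂ)+1) := by rw [he]; push_cast; ring
      have hfq : (q.factorial : ℂ) ≠ 0 := Nat.cast_ne_zero.mpr q.factorial_ne_zero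
      have hgoal : (∮ z in C((0:ℂ), r), Complex.exp (x*z) * z ^ (e-1))
          = x * (2 * Real.pi * Complex.I * x ^ q / q.factorial) / ((q:ℂ)+1) := by
        rw [eq_div_iff hq]
        rw [heC] at hsub
        linear_combination hsub
      rw [show (-((q:ℤ)+1) - 1) = e - 1 by rw [he]; ring, hgoal, Nat.factorial_succ]
      push_cast
      field_simp
      ring


theorem stmt_10 (m : ℕ) (hm : 1 ≤ m) (β : Fin m → ℝ) (hβpos : ∀ k, 0 < β k)
    (hβ : Function.Injective β) (n : Fin m → ℕ) (hn : ∀ k, 1 ≤ n k) (p : ℕ)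
    (r : ℝ) (hr : 0 < r) (hrβ : ∀ k, r < β k) :
    ∃ P : Polynomial ℝ, P.Monic ∧ P.natDegree = ∑ k, n k ∧
      ∀ x : ℝ,
        (∮ s in C((0 : ℂ), r),
          Complex.exp ((x : ℂ) * s) * s ^ (-(∑ k, n k : ℤ) - (p : ℤ) - 1) *
            ∏ k, (s - (β k : ℂ)) ^ (n k)) =
        2 * Real.pi * Complex.I * (∏ k, (-(β k : ℂ)) ^ (n k)) /
            (((∑ k, n k) + p).factorial : ℂ) * (x : ℂ) ^ p * ((P.eval x : ℝ) : ℂ) := by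
  classical
  set N := ∑ k, n k with hN
  have hN1 : 1 ≤ N := by
    calc 1 ≤ m := hm
    _ = ∑ _k : Fin m, 1 := by simp
    _ ≤ N := Finset.sum_le_sum fun k _ => hn k
  set Q : Polynomial ℝ := ∏ k, (Polynomial.X - Polynomial.C (β k)) ^ (n k) with hQ
  have hQm : Q.Monic := Polynomial.monic_prod_of_monic _ _ fun k _ =>
    (Polynomial.monic_X_sub_C _).pow _
  have hQdeg : Q.natDegree = N := by
    rw [hQ, Polynomial.natDegree_prod _ _ fun k _ =>
      ((Polynomial.monic_X_sub_C (β k)).pow _).ne_zero]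
    simp [Polynomial.natDegree_pow, Polynomial.natDegree_X_sub_C, hN]
  have hQ0 : Q.coeff 0 = ∏ k, (-β k) ^ (n k) := by
    rw [Polynomial.coeff_zero_eq_eval_zero, hQ, Polynomial.eval_prod]
    simp [zero_sub]
  have hQ0ne : Q.coeff 0 ≠ 0 := by
    rw [hQ0]
    exact Finset.prod_ne_zero_iff.2 fun k _ => pow_ne_zero _ (by linarith [hβpos k])
  set P : Polynomial ℝ := ∑ j ∈ range (N+1),
    Polynomial.C (Q.coeff j * ((N+p).descFactorial j : ℝ) / Q.coeff 0) * Polynomial.X ^ (N - j)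
    with hP
  have hcoeffN : P.coeff N = 1 := by
    rw [hP, Polynomial.finset_sum_coeff, Finset.sum_eq_single 0]
    · simp [Polynomial.coeff_C_mul, Polynomial.coeff_X_pow, div_self hQ0ne]
    · intro j hj hj0
      rw [Finset.mem_range] at hj
      simp only [Polynomial.coeff_C_mul, Polynomial.coeff_X_pow]
      rw [if_neg (by omega : ¬ N = N - j), mul_zero]
    · intro h; exact absurd (Finset.mem_range.2 (by omega)) h
  have hPdegle : P.natDegree ≤ N := by
    refine Polynomial.natDegree_sum_le_of_forall_le _ _ fun j hj => ?_
    refine (Polynomial.natDegree_C_mul_le _ _).trans ?_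
    rw [Polynomial.natDegree_X_pow]; omega
  have hPdeg : P.natDegree = N :=
    le_antisymm hPdegle (Polynomial.le_natDegree_of_ne_zero (by rw [hcoeffN]; exact one_ne_zero))
  have hPm : P.Monic := by rw [Polynomial.Monic, Polynomial.leadingCoeff, hPdeg, hcoeffN]
  refine ⟨P, hPm, hPdeg, fun x => ?_⟩
  have hcast : (∑ k, ((n k):ℤ)) = ((N:ℕ):ℤ) := by rw [hN]; push_cast; rfl
  simp only [hcast]
  have hsne : ∀ z ∈ Metric.sphere (0:ℂ) r, z ≠ 0 := by
    intro z hz h0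
    rw [mem_sphere_zero_iff_norm, h0] at hz
    simp at hz; linarith
  have hprod : ∀ s : ℂ, s ≠ 0 →
      Complex.exp ((x:ℂ)*s) * s ^ (-(N:ℤ) - (p:ℤ) - 1) * ∏ k, (s - (β k:ℂ))^(n k)
      = ∑ j ∈ range (N+1), (Q.coeff j : ℂ) *
          (Complex.exp ((x:ℂ)*s) * s ^ (-(((N+p-j):ℕ):ℤ) - 1)) := by
    intro s hs
    have haev : ∏ k, (s - (β k:ℂ))^(n k) = ∑ j ∈ range (N+1), (Q.coeff j : ℂ) * s ^ j := by
      have h1 : (Polynomial.aeval s) Q = ∏ k, (s - (β k:ℂ))^(n k) := by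
        rw [hQ, map_prod]
        refine Finset.prod_congr rfl fun k _ => ?_
        simp [map_pow, map_sub, Polynomial.aeval_X, Polynomial.aeval_C, Complex.coe_algebraMap]
      rw [← h1, Polynomial.aeval_eq_sum_range, hQdeg]
      refine Finset.sum_congr rfl fun j _ => ?_
      rw [Algebra.smul_def, Complex.coe_algebraMap]
    rw [haev, Finset.mul_sum]
    refine Finset.sum_congr rfl fun j hj => ?_
    rw [Finset.mem_range] at hj
    have hE : (-(N:ℤ) - (p:ℤ) - 1) + (j:ℤ) = -(((N+p-j):ℕ):ℤ) - 1 := by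
      have : (((N+p-j):ℕ):ℤ) = (N:ℤ) + (p:ℤ) - (j:ℤ) := by omega
      rw [this]; ring
    rw [← zpow_natCast s j, ← hE, zpow_add₀ hs]
    ring
  have hint1 : (∮ s in C((0:ℂ), r), Complex.exp ((x:ℂ)*s) * s ^ (-(N:ℤ)-(p:ℤ)-1)
        * ∏ k, (s - (β k:ℂ))^(n k))
      = ∑ j ∈ range (N+1), (Q.coeff j:ℂ) *
          (2 * Real.pi * Complex.I * (x:ℂ)^(N+p-j) / ((N+p-j).factorial : ℂ)) := by
    rw [circleIntegral.integral_congr hr.le (fun z hz => hprod z (hsne z hz))]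
    rw [myCircleIntegral_sum _ _ _ _ (fun j _ => intgr r hr _ _ _)]
    refine Finset.sum_congr rfl fun j hj => ?_
    rw [circleIntegral.integral_const_mul, key r hr]
  rw [hint1]
  have hQ0C : (∏ k, (-(β k:ℂ))^(n k)) = ((Q.coeff 0 : ℝ) : ℂ) := by
    rw [hQ0]; push_cast; rfl
  have hevalP : ((P.eval x : ℝ) : ℂ) = ∑ j ∈ range (N+1),
      ((Q.coeff j:ℂ) * (((N+p).descFactorial j : ℕ) : ℂ) / ((Q.coeff 0 : ℝ):ℂ)) * (x:ℂ)^(N-j) := by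
    rw [hP]
    push_cast [Polynomial.eval_finset_sum]
    refine Finset.sum_congr rfl fun j _ => ?_
    push_cast [Polynomial.eval_mul, Polynomial.eval_C, Polynomial.eval_pow, Polynomial.eval_X]
    ring
  rw [hQ0C, hevalP, Finset.mul_sum]
  refine Finset.sum_congr rfl fun j hj => ?_
  rw [Finset.mem_range] at hj
  have hfac : ((N+p-j).factorial : ℂ) * (((N+p).descFactorial j : ℕ) : ℂ) = ((N+p).factorial : ℂ) := by
    rw [← Nat.cast_mul, Nat.factorial_mul_descFactorial (by omega : j ≤ N+p)]
  have hxp : (x:ℂ)^(N+p-j) = (x:ℂ)^p * (x:ℂ)^(N-j) := by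
    rw [← pow_add]; congr 1; omega
  have h1 : ((N+p-j).factorial : ℂ) ≠ 0 := Nat.cast_ne_zero.mpr (Nat.factorial_ne_zero _)
  have h2 : ((N+p).factorial : ℂ) ≠ 0 := Nat.cast_ne_zero.mpr (Nat.factorial_ne_zero _)
  have h3 : ((Q.coeff 0 : ℝ):ℂ) ≠ 0 := by exact_mod_cast hQ0ne
  rw [hxp]
  field_simp
  linear_combination (-((Q.coeff j : ℂ) * (x:ℂ)^p * (x:ℂ)^(N-j))) * hfac
end

section
/- For every k ∈ {1, …, m} and every real r with 0 < r < min(β_k, min_{l≠k} |β_k − β_l|), there exists a polynomial A_k with real coefficients of degree at most n_k − 1 such that for every x ∈ ℝ, −(∏_{l=1}^m (−β_l)^{n_l} / (2πi · (|n|+p−1)!)) · ∮_{|t − β_k| = r} exp(−x·t) · t^{|n|+p−1} · ∏_{l=1}^m (t − β_l)^{−n_l} dt = A_k(x) · exp(−β_k x), where the circle integral is taken counterclockwise over the circle of center β_k and radius r. -/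
open MeasureTheory Finset

section AuxHidden
open Complex Filter Set Topology Metric

private lemma aux_key {U : Set ℂ} (hU : IsOpen U) {c : ℂ} {r : ℝ} (hr : 0 < r)
    (hsub : closedBall c r ⊆ U) (x : ℂ) :
    ∀ (j : ℕ) (G : ℂ → ℂ), AnalyticOnNhd ℂ G U →
      (∮ t in C(c, r), Complex.exp (-(x * t)) * G t * (t - c) ^ (-(j + 1 : ℤ)))
        = 2 * (Real.pi : ℂ) * Complex.I / (j.factorial : ℂ) * Complex.exp (-(x * c)) *
          ((fun (G : ℂ → ℂ) t => deriv G t - x * G t)^[j] G c) := by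
  intro j
  induction j with
  | zero =>
    intro G hG
    have hdiff : DifferentiableOn ℂ (fun t => Complex.exp (-(x * t)) * G t) (closedBall c r) := by
      apply DifferentiableOn.mul
      · apply Differentiable.differentiableOn
        fun_prop
      · exact hG.differentiableOn.mono hsub
    have hcif := hdiff.circleIntegral_sub_inv_smul (mem_ball_self hr)
    have hfun : (fun t => Complex.exp (-(x * t)) * G t * (t - c) ^ (-((0:ℕ) + 1 : ℤ)))
        = fun z => (z - c)⁻¹ • (Complex.exp (-(x * z)) * G z) := by
      funext z
      norm_num [smul_eq_mul]
      ring
    rw [hfun, hcif]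
    simp [smul_eq_mul]
    ring
  | succ j ih =>
    intro G hG
    have hsph : sphere c r ⊆ U := fun z hz => hsub (sphere_subset_closedBall hz)
    have hG' : AnalyticOnNhd ℂ (fun t => deriv G t - x * G t) U :=
      (hG.deriv).sub (analyticOnNhd_const.mul hG)
    have hcast : ((j + 1 : ℕ) : ℤ) + 1 = (j : ℤ) + 1 + 1 := by push_cast; ring
    have hzero : (∮ t in C(c, r),
        (Complex.exp (-(x * t)) * (deriv G t - x * G t) * (t - c) ^ (-(j + 1 : ℤ))
          - ((j + 1 : ℂ)) * (Complex.exp (-(x * t)) * G t * (t - c) ^ (-((j:ℤ) + 1 + 1))))) = 0 := by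
      refine circleIntegral.integral_eq_zero_of_hasDerivWithinAt hr.le
        (f := fun t => Complex.exp (-(x * t)) * G t * (t - c) ^ (-(j + 1 : ℤ))) fun z hz => ?_
      have hzU : z ∈ U := hsph hz
      have hzc : z - c ≠ 0 := by
        rw [sub_ne_zero]
        intro h
        rw [mem_sphere, h, dist_self] at hz
        exact hr.ne hz
      have h1 : HasDerivAt (fun t : ℂ => Complex.exp (-(x * t))) (-x * Complex.exp (-(x * z))) z := by
        have h0 : HasDerivAt (fun t : ℂ => -(x * t)) (-x) z := by
          simpa using ((hasDerivAt_id z).const_mul x).fun_neg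
        simpa [mul_comm] using h0.cexp
      have h2 : HasDerivAt G (deriv G z) z := ((hG z hzU).differentiableAt).hasDerivAt
      have h3 : HasDerivAt (fun t : ℂ => (t - c) ^ (-(j + 1 : ℤ)))
          ((-(j + 1 : ℂ)) * (z - c) ^ (-((j:ℤ) + 1 + 1))) z := by
        have h0 : HasDerivAt (fun t : ℂ => t - c) 1 z := (hasDerivAt_id z).sub_const c
        have h4 := (hasDerivAt_zpow (-(j + 1 : ℤ)) (z - c) (Or.inl hzc)).comp z h0
        have hexp : (-(j + 1 : ℤ)) - 1 = -((j:ℤ) + 1 + 1) := by ring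
        simp only [Function.comp_def, hexp, mul_one] at h4
        refine h4.congr_deriv ?_
        push_cast
        ring
      have hD := (h1.mul h2).mul h3
      have heq : Complex.exp (-(x * z)) * (deriv G z - x * G z) * (z - c) ^ (-(j + 1 : ℤ))
          - ((j + 1 : ℂ)) * (Complex.exp (-(x * z)) * G z * (z - c) ^ (-((j:ℤ) + 1 + 1)))
          = (-x * Complex.exp (-(x * z)) * G z + Complex.exp (-(x * z)) * deriv G z)
              * (z - c) ^ (-(j + 1 : ℤ))
            + Complex.exp (-(x * z)) * G z * ((-(j + 1 : ℂ)) * (z - c) ^ (-((j:ℤ) + 1 + 1))) := by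
        ring
      rw [heq]
      exact hD.hasDerivWithinAt
    have hcont_exp : ContinuousOn (fun t : ℂ => Complex.exp (-(x * t))) (sphere c r) := by
      apply Continuous.continuousOn; fun_prop
    have hcont_zpow : ∀ mm : ℤ, ContinuousOn (fun t : ℂ => (t - c) ^ mm) (sphere c r) := by
      intro mm t ht
      have htc : t - c ≠ 0 := by
        rw [sub_ne_zero]
        intro h
        rw [mem_sphere, h, dist_self] at ht
        exact hr.ne ht
      exact ((continuousAt_id.sub continuousAt_const).zpow₀ mm (Or.inl htc)).continuousWithinAt
    have I1 : CircleIntegrable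
        (fun t => Complex.exp (-(x * t)) * (deriv G t - x * G t) * (t - c) ^ (-(j + 1 : ℤ))) c r := by
      apply ContinuousOn.circleIntegrable hr.le
      exact (hcont_exp.mul ((hG'.continuousOn).mono hsph)).mul (hcont_zpow _)
    have I2 : CircleIntegrable
        (fun t => ((j + 1 : ℂ)) * (Complex.exp (-(x * t)) * G t * (t - c) ^ (-((j:ℤ) + 1 + 1)))) c r := by
      apply ContinuousOn.circleIntegrable hr.le
      exact continuousOn_const.mul
        (((hcont_exp.mul ((hG.continuousOn).mono hsph))).mul (hcont_zpow _))
    rw [circleIntegral.integral_sub I1 I2, circleIntegral.integral_const_mul] at hzero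
    have hIH := ih (fun t => deriv G t - x * G t) hG'
    rw [hIH] at hzero
    have hiter : ((fun (G : ℂ → ℂ) t => deriv G t - x * G t)^[j + 1] G)
        = ((fun (G : ℂ → ℂ) t => deriv G t - x * G t)^[j] (fun t => deriv G t - x * G t)) := by
      rw [Function.iterate_succ_apply]
    have hexp2 : (-((j + 1 : ℕ) + 1 : ℤ)) = (-((j:ℤ) + 1 + 1)) := by push_cast; ring
    rw [hexp2, hiter]
    have hj1 : (j : ℂ) + 1 ≠ 0 := Nat.cast_add_one_ne_zero j
    have hfac : (((j+1).factorial : ℂ)) = ((j:ℂ) + 1) * (j.factorial : ℂ) := by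
      rw [Nat.factorial_succ]; push_cast; ring
    have hfj : ((j.factorial : ℂ)) ≠ 0 := Nat.cast_ne_zero.2 (Nat.factorial_ne_zero _)
    have hfj1 : (((j+1).factorial : ℂ)) ≠ 0 := Nat.cast_ne_zero.2 (Nat.factorial_ne_zero _)
    rw [hfac]
    field_simp at hzero ⊢
    linear_combination (-1 : ℂ) * hzero


private lemma aux_leib {U : Set ℂ} (hU : IsOpen U) {F : ℂ → ℂ} (hF : AnalyticOnNhd ℂ F U)
    (x : ℂ) : ∀ (j : ℕ), Set.EqOn ((fun (G : ℂ → ℂ) t => deriv G t - x * G t)^[j] F)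
      (fun t => ∑ i ∈ Finset.range (j + 1), (j.choose i : ℂ) * (-x) ^ i * deriv^[j - i] F t) U := by
  intro j
  induction j with
  | zero => intro t _; simp
  | succ j ih =>
    intro t ht
    rw [Function.iterate_succ_apply']
    have hd : deriv ((fun (G : ℂ → ℂ) t => deriv G t - x * G t)^[j] F) t
        = deriv (fun t => ∑ i ∈ Finset.range (j + 1),
            (j.choose i : ℂ) * (-x) ^ i * deriv^[j - i] F t) t := by
      apply Filter.EventuallyEq.deriv_eq
      filter_upwards [hU.mem_nhds ht] with s hs using ih hs
    show deriv _ t - x * _ = _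
    rw [hd, ih ht]
    have hdsum : deriv (fun t => ∑ i ∈ Finset.range (j + 1),
        (j.choose i : ℂ) * (-x) ^ i * deriv^[j - i] F t) t
        = ∑ i ∈ Finset.range (j + 1), (j.choose i : ℂ) * (-x) ^ i * deriv^[j - i + 1] F t := by
      rw [deriv_fun_sum (fun i _ => (((hF.iterated_deriv (j - i)) t ht).differentiableAt.const_mul _))]
      refine Finset.sum_congr rfl fun i _ => ?_
      rw [deriv_const_mul _ ((hF.iterated_deriv (j - i)) t ht).differentiableAt,
        ← Function.iterate_succ_apply' deriv (j - i) F]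
    rw [hdsum]
    -- now pure algebra/combinatorics
    have key : ∀ a : ℕ → ℂ,
        (∑ i ∈ Finset.range (j + 1), (j.choose i : ℂ) * a i)
          + ∑ i ∈ Finset.range (j + 1), (j.choose i : ℂ) * a (i + 1)
        = ∑ i ∈ Finset.range (j + 2), ((j + 1).choose i : ℂ) * a i := by
      intro a
      rw [Finset.sum_range_succ' (fun i => ((j + 1).choose i : ℂ) * a i) (j + 1)]
      rw [Finset.sum_range_succ' (fun i => ((j).choose i : ℂ) * a i) j]
      have h0 : ((∑ i ∈ Finset.range j, ((j.choose (i + 1) : ℂ)) * a (i + 1)))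
          = ∑ i ∈ Finset.range (j + 1), ((j.choose (i + 1) : ℂ)) * a (i + 1) := by
        rw [Finset.sum_range_succ]
        simp [Nat.choose_succ_self]
      rw [h0, add_right_comm, ← Finset.sum_add_distrib]
      have h1 : ∀ i ∈ Finset.range (j + 1),
          (j.choose (i + 1) : ℂ) * a (i + 1) + (j.choose i : ℂ) * a (i + 1)
            = ((j + 1).choose (i + 1) : ℂ) * a (i + 1) := by
        intro i _
        rw [Nat.choose_succ_succ (j) (i)]
        push_cast
        ring
      rw [Finset.sum_congr rfl h1]
      simp
    have h2 : (∑ i ∈ Finset.range (j + 1), (j.choose i : ℂ) * (-x) ^ i * deriv^[j - i + 1] F t)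
        - x * ∑ i ∈ Finset.range (j + 1), (j.choose i : ℂ) * (-x) ^ i * deriv^[j - i] F t
        = (∑ i ∈ Finset.range (j + 1),
            (j.choose i : ℂ) * ((-x) ^ i * deriv^[j + 1 - i] F t))
          + ∑ i ∈ Finset.range (j + 1),
            (j.choose i : ℂ) * ((-x) ^ (i + 1) * deriv^[j + 1 - (i + 1)] F t) := by
      rw [Finset.mul_sum, ← Finset.sum_sub_distrib, ← Finset.sum_add_distrib]
      refine Finset.sum_congr rfl fun i hi => ?_
      have hi' : i ≤ j := Nat.lt_succ_iff.mp (Finset.mem_range.mp hi)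
      have e1 : j - i + 1 = j + 1 - i := by omega
      have e2 : j + 1 - (i + 1) = j - i := by omega
      rw [e1, e2, pow_succ]
      ring
    rw [h2, key (fun i => (-x) ^ i * deriv^[j + 1 - i] F t)]
    refine Finset.sum_congr rfl fun i _ => ?_
    ring


private lemma hasDerivAt_conj_conj' {f : ℂ → ℂ} {d z : ℂ} (h : HasDerivAt f d z) :
    HasDerivAt (fun w => (starRingEnd ℂ) (f ((starRingEnd ℂ) w))) ((starRingEnd ℂ) d)
      ((starRingEnd ℂ) z) := by
  rw [hasDerivAt_iff_tendsto_slope] at h ⊢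
  have hc : Tendsto (fun w => (starRingEnd ℂ) w) (𝓝[≠] ((starRingEnd ℂ) z)) (𝓝[≠] z) := by
    apply tendsto_nhdsWithin_of_tendsto_nhds_of_eventually_within
    · have h1 : Tendsto (fun w => (starRingEnd ℂ) w) (𝓝 ((starRingEnd ℂ) z))
          (𝓝 ((starRingEnd ℂ) ((starRingEnd ℂ) z))) :=
        Complex.continuous_conj.tendsto _
      simp only [Complex.conj_conj] at h1
      exact h1.mono_left nhdsWithin_le_nhds
    · filter_upwards [self_mem_nhdsWithin] with w hw
      simp only [mem_compl_iff, mem_singleton_iff] at hw ⊢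
      intro hco
      apply hw
      have := congrArg (starRingEnd ℂ) hco
      simpa using this
  have key : slope (fun w => (starRingEnd ℂ) (f ((starRingEnd ℂ) w))) ((starRingEnd ℂ) z)
      = fun w => (starRingEnd ℂ) (slope f z ((starRingEnd ℂ) w)) := by
    funext w
    simp only [slope_def_field]
    rw [map_div₀, map_sub, map_sub]
    simp
  rw [key]
  exact (Complex.continuous_conj.tendsto d).comp (h.comp hc)

private lemma aux_symm {U : Set ℂ} (hU : IsOpen U) (hUc : ∀ z ∈ U, (starRingEnd ℂ) z ∈ U)
    {F : ℂ → ℂ} (hF : AnalyticOnNhd ℂ F U)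
    (hsym : ∀ z, F ((starRingEnd ℂ) z) = (starRingEnd ℂ) (F z)) :
    ∀ j, ∀ z ∈ U, deriv^[j] F ((starRingEnd ℂ) z) = (starRingEnd ℂ) (deriv^[j] F z) := by
  intro j
  induction j with
  | zero => intro z _; exact hsym z
  | succ j ih =>
    intro z hz
    simp only [Function.iterate_succ_apply']
    have hd : HasDerivAt (deriv^[j] F) (deriv (deriv^[j] F) z) z :=
      (((hF.iterated_deriv j) z hz).differentiableAt).hasDerivAt
    have h2 := hasDerivAt_conj_conj' hd
    have heq : (deriv^[j] F)
        =ᶠ[𝓝 ((starRingEnd ℂ) z)] (fun w => (starRingEnd ℂ) (deriv^[j] F ((starRingEnd ℂ) w))) := by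
      filter_upwards [hU.mem_nhds (hUc z hz)] with w hw
      have h3 := ih ((starRingEnd ℂ) w) (hUc w hw)
      rw [Complex.conj_conj] at h3
      rw [h3]
    have h3 : HasDerivAt (deriv^[j] F) ((starRingEnd ℂ) (deriv (deriv^[j] F) z))
        ((starRingEnd ℂ) z) := h2.congr_of_eventuallyEq heq
    exact h3.deriv
end AuxHidden

theorem stmt_14 (m : ℕ) (hm : 1 ≤ m) (β : Fin m → ℝ) (hβpos : ∀ k, 0 < β k)
    (hβ : Function.Injective β) (n : Fin m → ℕ) (hn : ∀ k, 1 ≤ n k) (p : ℕ)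
    (k : Fin m) (r : ℝ) (hr : 0 < r) (hrβ : r < β k)
    (hrk : ∀ l, l ≠ k → r < |β k - β l|) :
    ∃ A : Polynomial ℝ, A.natDegree ≤ n k - 1 ∧
      ∀ x : ℝ,
        -((∏ l, (-(β l : ℂ)) ^ (n l)) /
            (2 * Real.pi * Complex.I * (((∑ l, n l) + p - 1).factorial : ℂ))) *
          (∮ t in C((β k : ℂ), r),
            Complex.exp (-((x : ℂ) * t)) * t ^ ((∑ l, n l) + p - 1) *
              ∏ l, (t - (β l : ℂ)) ^ (-(n l : ℤ))) =
        ((A.eval x : ℝ) : ℂ) * Real.exp (-(β k * x)) := by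
  classical
  set Nm1 : ℕ := (∑ l, n l) + p - 1 with hNm1def
  set c : ℂ := (β k : ℂ) with hcdef
  set M : ℕ := n k - 1 with hMdef
  set U : Set ℂ := {t : ℂ | ∀ l, l ≠ k → t ≠ (β l : ℂ)} with hUdef
  set F : ℂ → ℂ :=
    fun t => t ^ Nm1 * ∏ l ∈ Finset.univ.erase k, (t - (β l : ℂ)) ^ (-(n l : ℤ)) with hFdef
  have hU : IsOpen U := by
    have hUeq : U = ⋂ l : Fin m, {t : ℂ | l ≠ k → t ≠ (β l : ℂ)} := by
      ext t; simp [hUdef, Set.mem_iInter]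
    rw [hUeq]
    apply isOpen_iInter_of_finite
    intro l
    by_cases hl : l = k
    · have : {t : ℂ | l ≠ k → t ≠ (β l : ℂ)} = Set.univ := by ext t; simp [hl]
      rw [this]; exact isOpen_univ
    · have : {t : ℂ | l ≠ k → t ≠ (β l : ℂ)} = {((β l : ℝ) : ℂ)}ᶜ := by ext t; simp [hl]
      rw [this]; exact isOpen_compl_singleton
  have hsub : Metric.closedBall c r ⊆ U := by
    intro t ht l hl heq
    rw [Metric.mem_closedBall, heq, hcdef, Complex.dist_eq, ← Complex.ofReal_sub,
      Complex.norm_real, Real.norm_eq_abs, abs_sub_comm] at ht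
    exact absurd (hrk l hl) (not_lt.2 ht)
  have hcU : c ∈ U := by
    intro l hl heq
    rw [hcdef] at heq
    exact hl (hβ (Complex.ofReal_injective heq)).symm
  have hUc : ∀ z ∈ U, (starRingEnd ℂ) z ∈ U := by
    intro z hz l hl heq
    apply hz l hl
    have := congrArg (starRingEnd ℂ) heq
    rw [Complex.conj_conj, Complex.conj_ofReal] at this
    exact this
  have hFd : DifferentiableOn ℂ F U := by
    intro t ht
    apply DifferentiableAt.differentiableWithinAt
    rw [hFdef]
    apply DifferentiableAt.mul
    · exact differentiableAt_id.pow Nm1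
    · apply DifferentiableAt.fun_finsetProd
      intro l hl
      exact (differentiableAt_id.sub_const _).zpow
        (Or.inl (sub_ne_zero.2 (ht l (Finset.ne_of_mem_erase hl))))
  have hFA : AnalyticOnNhd ℂ F U := hFd.analyticOnNhd hU
  have hconjF : ∀ z, F ((starRingEnd ℂ) z) = (starRingEnd ℂ) (F z) := by
    intro z
    rw [hFdef]
    simp only [map_mul, map_pow, map_prod, map_zpow₀, map_sub, Complex.conj_ofReal]
  have hyreal : ∀ i, deriv^[i] F c = (((deriv^[i] F c).re : ℝ) : ℂ) := by
    intro i
    have h := aux_symm hU hUc hFA hconjF i c hcU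
    rw [hcdef, Complex.conj_ofReal] at h
    exact (Complex.conj_eq_iff_re.mp h.symm).symm
  refine ⟨∑ i ∈ Finset.range (M + 1), Polynomial.C
      (-((∏ l, (-β l) ^ (n l)) * (M.choose i) * (-1 : ℝ) ^ i * ((deriv^[M - i] F c).re))
        / (Nm1.factorial * M.factorial)) * Polynomial.X ^ i, ?_, ?_⟩
  · apply Polynomial.natDegree_sum_le_of_forall_le
    intro i hi
    refine le_trans (Polynomial.natDegree_C_mul_le _ _) ?_
    rw [Polynomial.natDegree_X_pow]
    exact Nat.lt_succ_iff.mp (Finset.mem_range.mp hi)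
  · intro x
    have hnk : M + 1 = n k := by have := hn k; omega
    have hMk : (-(n k : ℤ)) = -(M + 1 : ℤ) := by rw [← hnk]; push_cast; ring
    have hintf : (fun t : ℂ => Complex.exp (-((x : ℂ) * t)) * t ^ Nm1 *
          ∏ l, (t - (β l : ℂ)) ^ (-(n l : ℤ)))
        = fun t => Complex.exp (-((x : ℂ) * t)) * F t * (t - c) ^ (-(M + 1 : ℤ)) := by
      funext t
      rw [← Finset.mul_prod_erase Finset.univ _ (Finset.mem_univ k), hMk]
      simp only [hFdef, hcdef]
      ring
    have hπ : ((Real.pi : ℝ) : ℂ) ≠ 0 := Complex.ofReal_ne_zero.2 Real.pi_ne_zero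
    have hI : Complex.I ≠ 0 := Complex.I_ne_zero
    have hNf : ((Nm1.factorial : ℕ) : ℂ) ≠ 0 := Nat.cast_ne_zero.2 (Nat.factorial_ne_zero _)
    have hMf : ((M.factorial : ℕ) : ℂ) ≠ 0 := Nat.cast_ne_zero.2 (Nat.factorial_ne_zero _)
    have hcancel : ∀ BB e' S' : ℂ,
        -(BB / (2 * (Real.pi : ℂ) * Complex.I * ((Nm1.factorial : ℕ) : ℂ)))
            * (2 * (Real.pi : ℂ) * Complex.I / ((M.factorial : ℕ) : ℂ) * e' * S')
          = -(BB / (((Nm1.factorial : ℕ) : ℂ) * ((M.factorial : ℕ) : ℂ))) * e' * S' := by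
      intro BB e' S'
      have h2πI : (2 * (Real.pi : ℂ) * Complex.I) ≠ 0 :=
        mul_ne_zero (mul_ne_zero two_ne_zero hπ) hI
      have hcc : (2 * (Real.pi : ℂ) * Complex.I) * (2 * (Real.pi : ℂ) * Complex.I)⁻¹ = 1 :=
        mul_inv_cancel₀ h2πI
      calc -(BB / (2 * (Real.pi : ℂ) * Complex.I * ((Nm1.factorial : ℕ) : ℂ)))
            * (2 * (Real.pi : ℂ) * Complex.I / ((M.factorial : ℕ) : ℂ) * e' * S')
          = -(BB * ((2 * (Real.pi : ℂ) * Complex.I) * (2 * (Real.pi : ℂ) * Complex.I)⁻¹)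
              / (((Nm1.factorial : ℕ) : ℂ) * ((M.factorial : ℕ) : ℂ))) * e' * S' := by
            ring
        _ = -(BB / (((Nm1.factorial : ℕ) : ℂ) * ((M.factorial : ℕ) : ℂ))) * e' * S' := by
            rw [hcc]; ring
    rw [hintf, aux_key hU hr hsub (x : ℂ) M F hFA]
    have hL := (aux_leib hU hFA (x : ℂ) M) hcU
    rw [hL]
    simp only []
    rw [hcancel]
    have hsum : (∑ i ∈ Finset.range (M + 1),
          (M.choose i : ℂ) * (-(x : ℂ)) ^ i * deriv^[M - i] F c)
        = ∑ i ∈ Finset.range (M + 1),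
          (M.choose i : ℂ) * (-(x : ℂ)) ^ i * (((deriv^[M - i] F c).re : ℝ) : ℂ) :=
      Finset.sum_congr rfl fun i _ => by rw [← hyreal]
    rw [hsum]
    have hexp : Complex.exp (-((x : ℂ) * c)) = ((Real.exp (-(β k * x)) : ℝ) : ℂ) := by
      rw [Complex.ofReal_exp]
      congr 1
      rw [hcdef]
      push_cast
      ring
    rw [hexp, Polynomial.eval_finset_sum]
    simp only [Polynomial.eval_mul, Polynomial.eval_C, Polynomial.eval_pow, Polynomial.eval_X]
    have hBc : (∏ l, (-((β l : ℝ) : ℂ)) ^ (n l)) = (((∏ l, (-β l) ^ (n l) : ℝ) : ℝ) : ℂ) := by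
      push_cast
      rfl
    rw [hBc]
    rw [Finset.mul_sum, Complex.ofReal_sum, Finset.sum_mul]
    refine Finset.sum_congr rfl fun i _ => ?_
    push_cast
    generalize hP : (∏ l : Fin m, (-((β l : ℝ) : ℂ)) ^ (n l)) = P
    field_simp
    ring
end
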